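/- arXiv:1809.01695 — 2 statements merged into one kernel-verified Lean document; each statement's English description precedes it below -/
import Mathlib

section
/- Let B be a bounded selfadjoint operator on a complex Hilbert space H, S a closed subspace of H, and S = S+ ⊕_B S− any decomposition. Then the following are equivalent: (i) B is S-weakly complementable; (ii) there exist selfadjoint B1, B2, B3 ∈ L(H) with B2 and B3 positive, B = B1 + B2 − B3, S ⊆ N(B1), S− ⊆ N(B2), and S+ ⊆ N(B3); (iii) the sets M^−(B, S+^⊥) and M^+(B, S−^⊥) are non-empty; (iv) B is S+-weakly complementable and B is S−-weakly complementable. -/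
open ContinuousLinearMap

noncomputable section

variable {H : Type*} [NormedAddCommGroup H] [InnerProductSpace ℂ H] [CompleteSpace H]

/-- The orthogonal projection onto a closed subspace `S`, as an endomorphism of `H`. -/
def projL (S : Submodule ℂ H) [S.HasOrthogonalProjection] : H →L[ℂ] H :=
  S.subtypeL.comp S.orthogonalProjectionOnto

/-- The corner `a = P_S B P_S` of the block decomposition of `B` w.r.t. `H = S ⊕ Sᗮ`. -/
def blockA (B : H →L[ℂ] H) (S : Submodule ℂ H) [S.HasOrthogonalProjection] : H →L[ℂ] H :=
  projL S * B * projL S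

/-- The corner `b = P_S B P_{Sᗮ}` of the block decomposition of `B` w.r.t. `H = S ⊕ Sᗮ`. -/
def blockB (B : H →L[ℂ] H) (S : Submodule ℂ H) [S.HasOrthogonalProjection] : H →L[ℂ] H :=
  projL S * B * (1 - projL S)

/-- The corner `c = P_{Sᗮ} B P_{Sᗮ}` of the block decomposition of `B` w.r.t. `H = S ⊕ Sᗮ`. -/
def blockC (B : H →L[ℂ] H) (S : Submodule ℂ H) [S.HasOrthogonalProjection] : H →L[ℂ] H :=
  (1 - projL S) * B * (1 - projL S)

/-- `m = |a|^{1/2}`: `m` is the (unique) positive fourth root of `a⋆ a`. -/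
def IsSqrtAbs (a m : H →L[ℂ] H) : Prop :=
  m.IsPositive ∧ m ^ 4 = adjoint a * a

/-- `B` is `S`-weakly complementable: `range b ⊆ range |a|^{1/2}`. -/
def IsWeaklyComplementable (B : H →L[ℂ] H) (S : Submodule ℂ H)
    [S.HasOrthogonalProjection] : Prop :=
  ∃ m : H →L[ℂ] H, IsSqrtAbs (blockA B S) m ∧
    LinearMap.range (blockB B S : H →ₗ[ℂ] H) ≤ LinearMap.range (m : H →ₗ[ℂ] H)

/-- `B` is `S`-complementable: `H = S + B⁻¹(Sᗮ)`. -/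
def IsComplementable (B : H →L[ℂ] H) (S : Submodule ℂ H) : Prop :=
  S ⊔ Sᗮ.comap (B : H →ₗ[ℂ] H) = ⊤

/-- The set `P(B,S)` of `B`-selfadjoint bounded idempotents onto `S`. -/
def projSet (B : H →L[ℂ] H) (S : Submodule ℂ H) : Set (H →L[ℂ] H) :=
  {Q | Q * Q = Q ∧ LinearMap.range (Q : H →ₗ[ℂ] H) = S ∧ B * Q = adjoint Q * B}

/-- `Y` is the Schur complement `B_{/S} = [[0,0],[0, c - f⋆ u f]]`, where `f` is the reduced
solution of `b = |a|^{1/2} x` and `a = u |a|` is the polar decomposition of `a`. -/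
def IsSchur (B : H →L[ℂ] H) (S : Submodule ℂ H) [S.HasOrthogonalProjection]
    (Y : H →L[ℂ] H) : Prop :=
  ∃ m u f : H →L[ℂ] H,
    IsSqrtAbs (blockA B S) m ∧
    LinearMap.ker (u : H →ₗ[ℂ] H) = LinearMap.ker (blockA B S : H →ₗ[ℂ] H) ∧
    (∀ x ∈ (LinearMap.ker (blockA B S : H →ₗ[ℂ] H))ᗮ, ‖u x‖ = ‖x‖) ∧
    blockA B S = u * m ^ 2 ∧
    m * f = blockB B S ∧
    LinearMap.range (f : H →ₗ[ℂ] H) ≤ (LinearMap.range (m : H →ₗ[ℂ] H)).topologicalClosure ∧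
    Y = blockC B S - adjoint f * (u * f)

/-- The set `M⁻(B,T)`. -/
def Mminus (B : H →L[ℂ] H) (T : Submodule ℂ H) : Set (H →L[ℂ] H) :=
  {X | IsSelfAdjoint X ∧ (B - X).IsPositive ∧ LinearMap.range (X : H →ₗ[ℂ] H) ≤ T}

/-- The set `M⁺(B,T)`. -/
def Mplus (B : H →L[ℂ] H) (T : Submodule ℂ H) : Set (H →L[ℂ] H) :=
  {X | IsSelfAdjoint X ∧ (X - B).IsPositive ∧ LinearMap.range (X : H →ₗ[ℂ] H) ≤ T}

/-- `Y` is the Loewner maximum of `M`. -/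
def IsMaxOf (M : Set (H →L[ℂ] H)) (Y : H →L[ℂ] H) : Prop :=
  Y ∈ M ∧ ∀ X ∈ M, (Y - X).IsPositive

/-- `Z` is the Loewner minimum of `M`. -/
def IsMinOf (M : Set (H →L[ℂ] H)) (Z : H →L[ℂ] H) : Prop :=
  Z ∈ M ∧ ∀ X ∈ M, (X - Z).IsPositive

/-- `Z` is the greatest lower bound of `M` in the Loewner order on selfadjoint operators. -/
def IsGLBOf (M : Set (H →L[ℂ] H)) (Z : H →L[ℂ] H) : Prop :=
  IsSelfAdjoint Z ∧ (∀ X ∈ M, (X - Z).IsPositive) ∧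
    ∀ F : H →L[ℂ] H, IsSelfAdjoint F → (∀ X ∈ M, (X - F).IsPositive) → (Z - F).IsPositive

/-- `Y` is the least upper bound of `M` in the Loewner order on selfadjoint operators. -/
def IsLUBOf (M : Set (H →L[ℂ] H)) (Y : H →L[ℂ] H) : Prop :=
  IsSelfAdjoint Y ∧ (∀ X ∈ M, (Y - X).IsPositive) ∧
    ∀ F : H →L[ℂ] H, IsSelfAdjoint F → (∀ X ∈ M, (F - X).IsPositive) → (F - Y).IsPositive

/-- A decomposition `S = S₊ ⊕_B S₋` into a `B`-nonnegative and a `B`-nonpositive part. -/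
def IsWDecomp (B : H →L[ℂ] H) (S Sp Sm : Submodule ℂ H) : Prop :=
  (∀ x ∈ Sp, ∀ y ∈ Sm, (inner ℂ x y : ℂ) = 0) ∧
  Sp ⊔ Sm = S ∧
  (∀ x ∈ Sp, 0 ≤ (inner ℂ (B x) x : ℂ).re) ∧
  (∀ x ∈ Sm, (inner ℂ (B x) x : ℂ).re ≤ 0) ∧
  (∀ x ∈ Sp, ∀ y ∈ Sm, (inner ℂ (B x) y : ℂ) = 0)

/-- `Y` is Krein's shorted operator `B_{/T}` of the positive operator `B` to `T`:
the Loewner maximum of `{X : 0 ≤ X ≤ B, range X ⊆ Tᗮ}`. -/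
def IsShort (B : H →L[ℂ] H) (T : Submodule ℂ H) (Y : H →L[ℂ] H) : Prop :=
  (Y.IsPositive ∧ (B - Y).IsPositive ∧ LinearMap.range (Y : H →ₗ[ℂ] H) ≤ Tᗮ) ∧
    ∀ X : H →L[ℂ] H, X.IsPositive → (B - X).IsPositive → LinearMap.range (X : H →ₗ[ℂ] H) ≤ Tᗮ →
      (Y - X).IsPositive

/-- The set `{R⋆ Q⋆ B Q R : Q² = Q, N(Q) = T}`. -/
def comprSet2 (B R : H →L[ℂ] H) (T : Submodule ℂ H) : Set (H →L[ℂ] H) :=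
  {X | ∃ Q : H →L[ℂ] H, Q * Q = Q ∧ LinearMap.ker (Q : H →ₗ[ℂ] H) = T ∧
    X = adjoint R * (adjoint Q * B * Q) * R}

/-- The set `{Q⋆ B Q : Q² = Q, N(Q) = S}`. -/
def comprSet1 (B : H →L[ℂ] H) (S : Submodule ℂ H) : Set (H →L[ℂ] H) :=
  {X | ∃ Q : H →L[ℂ] H, Q * Q = Q ∧ LinearMap.ker (Q : H →ₗ[ℂ] H) = S ∧ X = adjoint Q * B * Q}

/-- The set `N⁻(W,T)` of the Krein space `(H, [x,y] = ⟨Jx,y⟩)`. -/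
def Nminus (J W : H →L[ℂ] H) (T : Submodule ℂ H) : Set (H →L[ℂ] H) :=
  {X | IsSelfAdjoint (J * X) ∧ (J * (W - X)).IsPositive ∧ LinearMap.range (X : H →ₗ[ℂ] H) ≤ T}

/-- The set `N⁺(W,T)` of the Krein space `(H, [x,y] = ⟨Jx,y⟩)`. -/
def Nplus (J W : H →L[ℂ] H) (T : Submodule ℂ H) : Set (H →L[ℂ] H) :=
  {X | IsSelfAdjoint (J * X) ∧ (J * (X - W)).IsPositive ∧ LinearMap.range (X : H →ₗ[ℂ] H) ≤ T}

/-- `Y` is the maximum of `M` in the Krein order induced by `J`. -/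
def KMaxOf (J : H →L[ℂ] H) (M : Set (H →L[ℂ] H)) (Y : H →L[ℂ] H) : Prop :=
  Y ∈ M ∧ ∀ X ∈ M, (J * (Y - X)).IsPositive

/-- `Z` is the minimum of `M` in the Krein order induced by `J`. -/
def KMinOf (J : H →L[ℂ] H) (M : Set (H →L[ℂ] H)) (Z : H →L[ℂ] H) : Prop :=
  Z ∈ M ∧ ∀ X ∈ M, (J * (X - Z)).IsPositive

/-- `E` is a densely defined projection (idempotent) with kernel `N`. -/
def IsDDProj (N : Submodule ℂ H) (E : H →ₗ.[ℂ] H) : Prop :=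
  Dense (E.domain : Set H) ∧
  (∃ h : ∀ x : E.domain, E x ∈ E.domain, ∀ x : E.domain, E ⟨E x, h x⟩ = E x) ∧
  (LinearMap.ker E.toFun).map E.domain.subtype = N

/-- `G` is the (everywhere defined, bounded) composition `E ∘ T`; in particular
`range T ⊆ dom E`. -/
def IsBddComp (E : H →ₗ.[ℂ] H) (T G : H →L[ℂ] H) : Prop :=
  ∃ h : ∀ x : H, T x ∈ E.domain, ∀ x : H, G x = E ⟨T x, h x⟩

set_option maxHeartbeats 1000000
set_option synthInstance.maxHeartbeats 400000
set_option linter.unusedSectionVars false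

namespace WCAux

local notation "⟪" x ", " y "⟫" => @inner ℂ _ _ x y

section ProjL
variable {S : Submodule ℂ H} [S.HasOrthogonalProjection]

lemma projL_mem (x : H) : projL S x ∈ S := (S.orthogonalProjectionOnto x).2

lemma projL_eq_self {x : H} (h : x ∈ S) : projL S x = x :=
  Submodule.starProjection_eq_self_iff.mpr h

lemma projL_eq_zero {x : H} (h : x ∈ Sᗮ) : projL S x = 0 := by
  show (S.orthogonalProjectionOnto x : H) = 0
  rw [Submodule.orthogonalProjectionOnto_apply_of_mem_orthogonal h]
  rfl

lemma projL_sa (S : Submodule ℂ H) [CompleteSpace S] :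
    IsSelfAdjoint (projL S) := isSelfAdjoint_starProjection S

lemma sub_projL_mem (x : H) : x - projL S x ∈ Sᗮ :=
  Submodule.sub_starProjection_mem_orthogonal x

lemma norm_sub_projL_le (x : H) : ‖x - projL S x‖ ≤ ‖x‖ := by
  have h : ⟪projL S x, x - projL S x⟫ = 0 :=
    (Submodule.mem_orthogonal S (x - projL S x)).mp (sub_projL_mem x) _ (projL_mem x)
  have h2 : ‖x‖ ^ 2 = ‖projL S x‖ ^ 2 + ‖x - projL S x‖ ^ 2 := by
    have := norm_add_sq (𝕜 := ℂ) (projL S x) (x - projL S x)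
    simp only [h, map_zero, mul_zero, add_zero] at this
    simpa using this
  nlinarith [norm_nonneg (x - projL S x), norm_nonneg x, norm_nonneg (projL S x)]

lemma projL_comp_eq_zero {T : H →L[ℂ] H} (h : ∀ x, T x ∈ Sᗮ) : projL S * T = 0 := by
  ext x
  exact projL_eq_zero (h x)

lemma comp_projL_eq_zero {T : H →L[ℂ] H} (h : ∀ x ∈ S, T x = 0) : T * projL S = 0 := by
  ext x
  exact h _ (projL_mem x)

end ProjL

lemma sa_inner_move {T : H →L[ℂ] H} (hT : IsSelfAdjoint T) (x y : H) :
    ⟪T x, y⟫ = ⟪x, T y⟫ := by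
  conv_rhs => rw [← hT.adjoint_eq]
  rw [adjoint_inner_right]

lemma apply_eq_zero_of_sa_sq {m : H →L[ℂ] H} (hm : IsSelfAdjoint m) {x : H}
    (h : m (m x) = 0) : m x = 0 := by
  have : ⟪m x, m x⟫ = 0 := by
    rw [sa_inner_move hm x (m x), h, inner_zero_right]
  exact inner_self_eq_zero.mp this

lemma range_le_orthogonal_of_ker {T : H →L[ℂ] H} (hT : IsSelfAdjoint T)
    {V : Submodule ℂ H} (h : ∀ v ∈ V, T v = 0) : LinearMap.range (T : H →ₗ[ℂ] H) ≤ Vᗮ := by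
  rintro y ⟨x, rfl⟩
  rw [Submodule.mem_orthogonal]
  intro u hu
  change ⟪u, T x⟫ = 0
  rw [← sa_inner_move hT u x, h u hu, inner_zero_left]

lemma sa_conj {T Q : H →L[ℂ] H} (hT : IsSelfAdjoint T) (hQ : IsSelfAdjoint Q) :
    IsSelfAdjoint (Q * T * Q) := by
  unfold IsSelfAdjoint
  rw [star_mul, star_mul, hT.star_eq, hQ.star_eq, mul_assoc]

lemma range_le_of_factor {m g b : H →L[ℂ] H} (h : m * g = b) :
    LinearMap.range (b : H →ₗ[ℂ] H) ≤ LinearMap.range (m : H →ₗ[ℂ] H) := by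
  rintro y ⟨x, rfl⟩
  exact ⟨g x, by rw [← h]; rfl⟩

lemma pow_four (m : H →L[ℂ] H) : m ^ 4 = m * m * (m * m) := by
  rw [show (4 : ℕ) = 2 + 2 from rfl, pow_add, sq]

lemma pos_sq_inj {x y : H →L[ℂ] H} (hx : 0 ≤ x) (hy : 0 ≤ y) (h : x * x = y * y) :
    x = y := by
  have h1 : CFC.sqrt (x * x) = x := CFC.sqrt_mul_self x
  have h2 : CFC.sqrt (y * y) = y := CFC.sqrt_mul_self y
  rw [← h1, h, h2]

end WCAux
namespace WCAux

local notation "⟪" x ", " y "⟫" => @inner ℂ _ _ x y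

lemma exists_factor_of_range_le {m b : H →L[ℂ] H}
    (hr : LinearMap.range (b : H →ₗ[ℂ] H) ≤ LinearMap.range (m : H →ₗ[ℂ] H)) :
    ∃ f : H →L[ℂ] H, m * f = b := by
  classical
  set N : Submodule ℂ H := LinearMap.ker (m : H →ₗ[ℂ] H) with hN
  haveI : CompleteSpace N := m.isClosed_ker.completeSpace_coe
  have hmN : ∀ u : H, u ∈ N → m u = 0 := fun u hu => hu
  have hx : ∀ x : H, ∃ z, m z = b x := fun x => hr ⟨x, rfl⟩
  set g : H → H := fun x => Classical.choose (hx x) - projL N (Classical.choose (hx x))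
    with hg
  have hwd : ∀ z w : H, m z = m w → z - projL N z = w - projL N w := by
    intro z w hzw
    have hmem : z - w ∈ N := by
      simp only [hN, LinearMap.mem_ker, ContinuousLinearMap.coe_coe, map_sub, hzw, sub_self]
    have h1 : (z - projL N z) - (w - projL N w) = (z - w) - projL N (z - w) := by
      rw [map_sub]; abel
    have h0 : (z - projL N z) - (w - projL N w) = 0 := by
      rw [h1, projL_eq_self hmem, sub_self]
    exact sub_eq_zero.mp h0
  have hval : ∀ (x z : H), m z = b x → g x = z - projL N z := fun x z hz =>
    hwd _ _ (by rw [Classical.choose_spec (hx x), hz])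
  have hmg : ∀ x, m (g x) = b x := by
    intro x
    have := Classical.choose_spec (hx x)
    simp only [hg, map_sub, this, hmN _ (projL_mem _), sub_zero]
  have hgK : ∀ x, g x ∈ Nᗮ := fun x => sub_projL_mem _
  have huniq : ∀ u v : H, u ∈ Nᗮ → v ∈ Nᗮ → m u = m v → u = v := by
    intro u v hu hv huv
    have h1 : u - v ∈ N := by
      simp only [hN, LinearMap.mem_ker, ContinuousLinearMap.coe_coe, map_sub, huv, sub_self]
    have h2 : u - v ∈ Nᗮ := Submodule.sub_mem _ hu hv
    have h3 : ⟪u - v, u - v⟫ = 0 := (Submodule.mem_orthogonal N (u - v)).mp h2 _ h1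
    exact sub_eq_zero.mp (inner_self_eq_zero.mp h3)
  have hadd : ∀ x y, g (x + y) = g x + g y := by
    intro x y
    refine huniq _ _ (hgK _) (Submodule.add_mem _ (hgK x) (hgK y)) ?_
    rw [hmg, map_add, map_add, hmg, hmg]
  have hsmul : ∀ (c : ℂ) (x : H), g (c • x) = c • g x := by
    intro c x
    refine huniq _ _ (hgK _) (Submodule.smul_mem _ _ (hgK x)) ?_
    rw [hmg, map_smul, map_smul, hmg]
  set glin : H →ₗ[ℂ] H :=
    { toFun := g, map_add' := hadd, map_smul' := hsmul } with hglin
  have hcg : ∀ (u : ℕ → H) (x y : H), Filter.Tendsto u Filter.atTop (nhds x) →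
      Filter.Tendsto (glin ∘ u) Filter.atTop (nhds y) → y = glin x := by
    intro u x y hu hy
    have h1 : Filter.Tendsto (fun n => m (g (u n))) Filter.atTop (nhds (m y)) :=
      (m.continuous.tendsto y).comp hy
    have h2 : Filter.Tendsto (fun n => b (u n)) Filter.atTop (nhds (b x)) :=
      (b.continuous.tendsto x).comp hu
    have h1' : Filter.Tendsto (fun n => b (u n)) Filter.atTop (nhds (m y)) := by
      simpa only [hmg] using h1
    have hmb : m y = b x := tendsto_nhds_unique h1' h2
    have hyK : y ∈ Nᗮ := by
      refine (Submodule.isClosed_orthogonal N).mem_of_tendsto hy ?_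
      exact Filter.Eventually.of_forall fun n => hgK (u n)
    exact huniq _ _ hyK (hgK x) (by rw [hmb]; exact (hmg x).symm)
  refine ⟨ContinuousLinearMap.ofSeqClosedGraph hcg, ?_⟩
  ext x
  have : (ContinuousLinearMap.ofSeqClosedGraph hcg) x = g x := rfl
  simp only [ContinuousLinearMap.mul_apply, this, hmg]

lemma range_le_of_norm_le {m b : H →L[ℂ] H} (hm : IsSelfAdjoint m) (C : ℝ)
    (h : ∀ z, ‖adjoint b z‖ ≤ C * ‖m z‖) :
    LinearMap.range (b : H →ₗ[ℂ] H) ≤ LinearMap.range (m : H →ₗ[ℂ] H) := by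
  rintro _ ⟨x, rfl⟩
  classical
  set R : Submodule ℂ H := LinearMap.range (m : H →ₗ[ℂ] H) with hR
  have hwd : ∀ z w : H, m z = m w → ⟪x, adjoint b z⟫ = ⟪x, adjoint b w⟫ := by
    intro z w hzw
    have h0 : ‖adjoint b z - adjoint b w‖ ≤ 0 := by
      have := h (z - w)
      simpa only [map_sub, hzw, sub_self, norm_zero, mul_zero] using this
    have : adjoint b z = adjoint b w :=
      sub_eq_zero.mp (norm_le_zero_iff.mp h0)
    rw [this]
  have hφval : ∀ (u : R) (z : H), m z = (u : H) →
      ⟪x, adjoint b (Classical.choose u.2)⟫ = ⟪x, adjoint b z⟫ := fun u z hz =>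
    hwd _ _ ((Classical.choose_spec u.2).trans hz.symm)
  set φ₀ : R →ₗ[ℂ] ℂ :=
    { toFun := fun u => ⟪x, adjoint b (Classical.choose u.2)⟫
      map_add' := by
        intro u v
        have hu : m (Classical.choose u.2) = u := Classical.choose_spec u.2
        have hv : m (Classical.choose v.2) = v := Classical.choose_spec v.2
        rw [hφval (u + v) (Classical.choose u.2 + Classical.choose v.2)
          (by rw [map_add, hu, hv]; rfl), map_add, inner_add_right]
      map_smul' := by
        intro c u
        have hu : m (Classical.choose u.2) = u := Classical.choose_spec u.2
        rw [hφval (c • u) (c • Classical.choose u.2)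
          (by rw [map_smul, hu]; rfl), map_smul, inner_smul_right]
        rfl } with hφ₀
  have hbound : ∀ u : R, ‖φ₀ u‖ ≤ (‖x‖ * C) * ‖u‖ := by
    intro u
    have hu : m (Classical.choose u.2) = u := Classical.choose_spec u.2
    have h1 : ‖φ₀ u‖ ≤ ‖x‖ * ‖adjoint b (Classical.choose u.2)‖ :=
      norm_inner_le_norm _ _
    have h2 : ‖adjoint b (Classical.choose u.2)‖ ≤ C * ‖m (Classical.choose u.2)‖ := h _
    have h3 : ‖m (Classical.choose u.2)‖ = ‖u‖ := by rw [hu]; rfl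
    calc ‖φ₀ u‖ ≤ ‖x‖ * ‖adjoint b (Classical.choose u.2)‖ := h1
      _ ≤ ‖x‖ * (C * ‖m (Classical.choose u.2)‖) :=
          mul_le_mul_of_nonneg_left h2 (norm_nonneg x)
      _ = (‖x‖ * C) * ‖u‖ := by rw [h3]; ring
  set φ : R →L[ℂ] ℂ := LinearMap.mkContinuous φ₀ (‖x‖ * C) hbound with hφ
  obtain ⟨Ψ, hΨ, -⟩ := exists_extension_norm_eq R φ
  refine ⟨(InnerProductSpace.toDual ℂ H).symm Ψ, ?_⟩
  apply ext_inner_right ℂ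
  intro v
  show ⟪m ((InnerProductSpace.toDual ℂ H).symm Ψ), v⟫ = ⟪b x, v⟫
  have h1 : ⟪m ((InnerProductSpace.toDual ℂ H).symm Ψ), v⟫
      = ⟪(InnerProductSpace.toDual ℂ H).symm Ψ, m v⟫ := sa_inner_move hm _ v
  have h2 : ⟪(InnerProductSpace.toDual ℂ H).symm Ψ, m v⟫ = Ψ (m v) :=
    InnerProductSpace.toDual_symm_apply
  have hmem : m v ∈ R := ⟨v, rfl⟩
  have h3 : Ψ (m v) = φ ⟨m v, hmem⟩ := hΨ ⟨m v, hmem⟩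
  have h4 : φ ⟨m v, hmem⟩ = ⟪x, adjoint b v⟫ := hφval ⟨m v, hmem⟩ v rfl
  have h5 : ⟪x, adjoint b v⟫ = ⟪b x, v⟫ := adjoint_inner_right b x v
  rw [h1, h2, h3, h4, h5]

end WCAux
namespace WCAux

local notation "⟪" x ", " y "⟫" => @inner ℂ _ _ x y

lemma factor_of_nonneg {P : H →L[ℂ] H} (hP : 0 ≤ P) (S : Submodule ℂ H)
    [CompleteSpace S] :
    ∃ f : H →L[ℂ] H, CFC.sqrt (blockA P S) * f = blockB P S := by
  have hPpos : P.IsPositive := (ContinuousLinearMap.nonneg_iff_isPositive P).mp hP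
  have hPsa : IsSelfAdjoint P := hPpos.isSelfAdjoint
  set r : H →L[ℂ] H := CFC.sqrt P with hr_def
  have hr2 : r * r = P := CFC.sqrt_mul_sqrt_self P hP
  have hrnn : (0 : H →L[ℂ] H) ≤ r := CFC.sqrt_nonneg _
  have hrsa : IsSelfAdjoint r :=
    ((ContinuousLinearMap.nonneg_iff_isPositive r).mp hrnn).isSelfAdjoint
  have hblock : (0 : H →L[ℂ] H) ≤ blockA P S := by
    rw [ContinuousLinearMap.nonneg_iff_isPositive]
    have h := hPpos.conj_adjoint (projL S)
    rwa [← ContinuousLinearMap.star_eq_adjoint, (projL_sa S).star_eq] at h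
  set s : H →L[ℂ] H := CFC.sqrt (blockA P S) with hs_def
  have hs2 : s * s = blockA P S := CFC.sqrt_mul_sqrt_self _ hblock
  have hsnn : (0 : H →L[ℂ] H) ≤ s := CFC.sqrt_nonneg _
  have hssa : IsSelfAdjoint s :=
    ((ContinuousLinearMap.nonneg_iff_isPositive s).mp hsnn).isSelfAdjoint
  have hstarb : adjoint (blockB P S) = (1 - projL S) * P * projL S := by
    rw [← ContinuousLinearMap.star_eq_adjoint]
    show star (projL S * P * (1 - projL S)) = _
    rw [star_mul, star_mul, hPsa.star_eq, (projL_sa S).star_eq, star_sub, star_one,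
      (projL_sa S).star_eq, ← mul_assoc]
  have hnorm : ∀ z, ‖adjoint (blockB P S) z‖ ≤ ‖r‖ * ‖s z‖ := by
    intro z
    have e1 : adjoint (blockB P S) z = P (projL S z) - projL S (P (projL S z)) := by
      rw [hstarb]
      simp only [ContinuousLinearMap.mul_apply, ContinuousLinearMap.sub_apply,
        ContinuousLinearMap.one_apply]
    have e2 : ‖P (projL S z) - projL S (P (projL S z))‖ ≤ ‖P (projL S z)‖ :=
      norm_sub_projL_le _
    have e3 : P (projL S z) = r (r (projL S z)) := by
      rw [← hr2]; rfl
    have e4 : ‖r (r (projL S z))‖ ≤ ‖r‖ * ‖r (projL S z)‖ := r.le_opNorm _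
    have e5 : ‖r (projL S z)‖ = ‖s z‖ := by
      have i1 : ⟪r (projL S z), r (projL S z)⟫ = ⟪projL S z, P (projL S z)⟫ := by
        rw [sa_inner_move hrsa, e3]
      have i2 : ⟪s z, s z⟫ = ⟪projL S z, P (projL S z)⟫ := by
        rw [sa_inner_move hssa]
        have h6 : s (s z) = projL S (P (projL S z)) := by
          rw [show s (s z) = (s * s) z from rfl, hs2]; rfl
        rw [h6, ← sa_inner_move (projL_sa S) z _]
      have i3 : ‖r (projL S z)‖ ^ 2 = ‖s z‖ ^ 2 := by
        have := congrArg RCLike.re (i1.trans i2.symm)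
        rwa [inner_self_eq_norm_sq, inner_self_eq_norm_sq] at this
      calc ‖r (projL S z)‖ = Real.sqrt (‖r (projL S z)‖ ^ 2) :=
            (Real.sqrt_sq (norm_nonneg _)).symm
        _ = Real.sqrt (‖s z‖ ^ 2) := by rw [i3]
        _ = ‖s z‖ := Real.sqrt_sq (norm_nonneg _)
    calc ‖adjoint (blockB P S) z‖ ≤ ‖P (projL S z)‖ := by rw [e1]; exact e2
      _ = ‖r (r (projL S z))‖ := by rw [e3]
      _ ≤ ‖r‖ * ‖r (projL S z)‖ := e4
      _ = ‖r‖ * ‖s z‖ := by rw [e5]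
  exact exists_factor_of_range_le (range_le_of_norm_le hssa ‖r‖ hnorm)

end WCAux
/-- Equivalent characterizations of `S`-weak complementability in terms of a decomposition
`S = S₊ ⊕_B S₋`. -/
theorem stmt_1 (B : H →L[ℂ] H) (hB : IsSelfAdjoint B)
    (S Sp Sm : Submodule ℂ H) [CompleteSpace S] [CompleteSpace Sp] [CompleteSpace Sm]
    (hdec : IsWDecomp B S Sp Sm) :
    (IsWeaklyComplementable B S ↔
      ∃ B1 B2 B3 : H →L[ℂ] H, IsSelfAdjoint B1 ∧ IsSelfAdjoint B2 ∧ IsSelfAdjoint B3 ∧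
        B2.IsPositive ∧ B3.IsPositive ∧ B = B1 + B2 - B3 ∧
        S ≤ LinearMap.ker (B1 : H →ₗ[ℂ] H) ∧ Sm ≤ LinearMap.ker (B2 : H →ₗ[ℂ] H) ∧ Sp ≤ LinearMap.ker (B3 : H →ₗ[ℂ] H)) ∧
    (IsWeaklyComplementable B S ↔
      ((Mminus B Spᗮ).Nonempty ∧ (Mplus B Smᗮ).Nonempty)) ∧
    (IsWeaklyComplementable B S ↔
      (IsWeaklyComplementable B Sp ∧ IsWeaklyComplementable B Sm)) := by
  classical
  obtain ⟨horth, hsup, hposd, hnegd, hBorth⟩ := hdec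
  -- submodule inclusions
  have hSpS : Sp ≤ S := hsup ▸ le_sup_left
  have hSmS : Sm ≤ S := hsup ▸ le_sup_right
  have hSmSp : Sm ≤ Spᗮ := by
    intro y hy
    rw [Submodule.mem_orthogonal]
    intro u hu
    exact horth u hu y hy
  have hSpSm : Sp ≤ Smᗮ := by
    intro y hy
    rw [Submodule.mem_orthogonal]
    intro u hu
    exact inner_eq_zero_symm.mp (horth y hy u hu)
  -- pointwise projection facts
  have pPpPm : ∀ x : H, projL Sp (projL Sm x) = 0 :=
    fun x => WCAux.projL_eq_zero (hSmSp (WCAux.projL_mem x))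
  have pPmPp : ∀ x : H, projL Sm (projL Sp x) = 0 :=
    fun x => WCAux.projL_eq_zero (hSpSm (WCAux.projL_mem x))
  have pPpPp : ∀ x : H, projL Sp (projL Sp x) = projL Sp x :=
    fun x => WCAux.projL_eq_self (WCAux.projL_mem x)
  have pPmPm : ∀ x : H, projL Sm (projL Sm x) = projL Sm x :=
    fun x => WCAux.projL_eq_self (WCAux.projL_mem x)
  have pSS : ∀ x : H, projL S (projL S x) = projL S x :=
    fun x => WCAux.projL_eq_self (WCAux.projL_mem x)
  have pPpS : ∀ x : H, projL Sp (projL S x) = projL Sp x := by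
    intro x
    have h2 : projL Sp (x - projL S x) = 0 :=
      WCAux.projL_eq_zero ((Submodule.orthogonal_le hSpS) (WCAux.sub_projL_mem x))
    rw [map_sub] at h2
    exact (sub_eq_zero.mp h2).symm
  have pPmS : ∀ x : H, projL Sm (projL S x) = projL Sm x := by
    intro x
    have h2 : projL Sm (x - projL S x) = 0 :=
      WCAux.projL_eq_zero ((Submodule.orthogonal_le hSmS) (WCAux.sub_projL_mem x))
    rw [map_sub] at h2
    exact (sub_eq_zero.mp h2).symm
  have pS : ∀ x : H, projL S x = projL Sp x + projL Sm x := by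
    intro x
    show S.starProjection x = _
    apply Submodule.eq_starProjection_of_mem_orthogonal
    · exact hsup ▸ Submodule.add_mem_sup (WCAux.projL_mem x) (WCAux.projL_mem x)
    · rw [Submodule.mem_orthogonal]
      intro u hu
      rw [← hsup] at hu
      rcases Submodule.mem_sup.mp hu with ⟨p, hp, q, hq, rfl⟩
      have e1 : (inner ℂ p (x - projL Sp x) : ℂ) = 0 :=
        (Submodule.mem_orthogonal Sp _).mp (WCAux.sub_projL_mem x) p hp
      have e2 : (inner ℂ q (x - projL Sm x) : ℂ) = 0 :=
        (Submodule.mem_orthogonal Sm _).mp (WCAux.sub_projL_mem x) q hq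
      have e3 : (inner ℂ p (projL Sm x) : ℂ) = 0 := horth p hp _ (WCAux.projL_mem x)
      have e4 : (inner ℂ q (projL Sp x) : ℂ) = 0 :=
        inner_eq_zero_symm.mp (horth _ (WCAux.projL_mem x) q hq)
      rw [inner_sub_right] at e1 e2
      simp only [inner_add_left, inner_sub_right, inner_add_right]
      linear_combination e1 + e2 - e3 - e4
  -- B-orthogonality pointwise
  have pBz1 : ∀ x : H, projL Sm (B (projL Sp x)) = 0 := by
    intro x
    apply WCAux.projL_eq_zero
    rw [Submodule.mem_orthogonal]
    intro u hu
    exact inner_eq_zero_symm.mp (hBorth _ (WCAux.projL_mem x) u hu)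
  have pBz2 : ∀ x : H, projL Sp (B (projL Sm x)) = 0 := by
    intro x
    apply WCAux.projL_eq_zero
    rw [Submodule.mem_orthogonal]
    intro u hu
    rw [← WCAux.sa_inner_move hB u _]
    exact hBorth u hu _ (WCAux.projL_mem x)
  -- selfadjointness of projections
  have hPpsa : IsSelfAdjoint (projL Sp) := WCAux.projL_sa Sp
  have hPmsa : IsSelfAdjoint (projL Sm) := WCAux.projL_sa Sm
  have hPSsa : IsSelfAdjoint (projL S) := WCAux.projL_sa S
  -- compressions
  set ap : H →L[ℂ] H := blockA B Sp with hap_def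
  set am : H →L[ℂ] H := -(blockA B Sm) with ham_def
  have pap : ∀ x : H, ap x = projL Sp (B (projL Sp x)) := fun x => rfl
  have pam : ∀ x : H, am x = -(projL Sm (B (projL Sm x))) := fun x => rfl
  have hapsa : IsSelfAdjoint ap := WCAux.sa_conj hB hPpsa
  have hamsa : IsSelfAdjoint am := (WCAux.sa_conj hB hPmsa).neg
  have hap : (0 : H →L[ℂ] H) ≤ ap := by
    rw [ContinuousLinearMap.nonneg_iff_isPositive]
    refine ⟨ContinuousLinearMap.isSelfAdjoint_iff_isSymmetric.mp hapsa, fun x => ?_⟩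
    show 0 ≤ RCLike.re (inner ℂ (ap x) x : ℂ)
    rw [pap, WCAux.sa_inner_move hPpsa (B (projL Sp x)) x]
    have := hposd (projL Sp x) (WCAux.projL_mem x)
    simpa using this
  have ham : (0 : H →L[ℂ] H) ≤ am := by
    rw [ContinuousLinearMap.nonneg_iff_isPositive]
    refine ⟨ContinuousLinearMap.isSelfAdjoint_iff_isSymmetric.mp hamsa, fun x => ?_⟩
    show 0 ≤ RCLike.re (inner ℂ (am x) x : ℂ)
    rw [pam, inner_neg_left, map_neg, WCAux.sa_inner_move hPmsa (B (projL Sm x)) x]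
    have := hnegd (projL Sm x) (WCAux.projL_mem x)
    simp only [RCLike.re_to_complex]
    linarith
  -- square roots
  set mp : H →L[ℂ] H := CFC.sqrt ap with hmp_def
  set mm : H →L[ℂ] H := CFC.sqrt am with hmm_def
  have hmp2 : mp * mp = ap := CFC.sqrt_mul_sqrt_self ap hap
  have hmm2 : mm * mm = am := CFC.sqrt_mul_sqrt_self am ham
  have hmpnn : (0 : H →L[ℂ] H) ≤ mp := CFC.sqrt_nonneg _
  have hmmnn : (0 : H →L[ℂ] H) ≤ mm := CFC.sqrt_nonneg _
  have hmpsa : IsSelfAdjoint mp :=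
    ((ContinuousLinearMap.nonneg_iff_isPositive mp).mp hmpnn).isSelfAdjoint
  have hmmsa : IsSelfAdjoint mm :=
    ((ContinuousLinearMap.nonneg_iff_isPositive mm).mp hmmnn).isSelfAdjoint
  -- kernel facts for the roots
  have hmp0 : ∀ u : H, projL Sp u = 0 → mp u = 0 := by
    intro u hu
    apply WCAux.apply_eq_zero_of_sa_sq hmpsa
    calc mp (mp u) = (mp * mp) u := rfl
      _ = ap u := by rw [hmp2]
      _ = 0 := by rw [pap, hu, map_zero, map_zero]
  have hmm0 : ∀ u : H, projL Sm u = 0 → mm u = 0 := by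
    intro u hu
    apply WCAux.apply_eq_zero_of_sa_sq hmmsa
    calc mm (mm u) = (mm * mm) u := rfl
      _ = am u := by rw [hmm2]
      _ = 0 := by rw [pam, hu, map_zero, map_zero, neg_zero]
  have pmpPp : ∀ x : H, mp (projL Sp x) = mp x := by
    intro x
    have h2 := hmp0 (x - projL Sp x) (by rw [map_sub, pPpPp, sub_self])
    rw [map_sub] at h2
    exact (sub_eq_zero.mp h2).symm
  have pmmPm : ∀ x : H, mm (projL Sm x) = mm x := by
    intro x
    have h2 := hmm0 (x - projL Sm x) (by rw [map_sub, pPmPm, sub_self])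
    rw [map_sub] at h2
    exact (sub_eq_zero.mp h2).symm
  have pmpPm : ∀ x : H, mp (projL Sm x) = 0 := fun x => hmp0 _ (pPpPm x)
  have pmmPp : ∀ x : H, mm (projL Sp x) = 0 := fun x => hmm0 _ (pPmPp x)
  have hmpPp : mp * projL Sp = mp := by ext x; exact pmpPp x
  have hmmPm : mm * projL Sm = mm := by ext x; exact pmmPm x
  have hPpmp : projL Sp * mp = mp := by
    have h := congrArg star hmpPp
    rwa [star_mul, hmpsa.star_eq, hPpsa.star_eq] at h
  have hPmmm : projL Sm * mm = mm := by
    have h := congrArg star hmmPm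
    rwa [star_mul, hmmsa.star_eq, hPmsa.star_eq] at h
  have pPpmp : ∀ x : H, projL Sp (mp x) = mp x := by
    intro x; rw [← ContinuousLinearMap.mul_apply, hPpmp]
  have pPmmm : ∀ x : H, projL Sm (mm x) = mm x := by
    intro x; rw [← ContinuousLinearMap.mul_apply, hPmmm]
  have hmpmm : mp * mm = 0 := by
    ext x
    show mp (mm x) = 0
    rw [← pPmmm x, pmpPm]
  have hmmmp : mm * mp = 0 := by
    ext x
    show mm (mp x) = 0
    rw [← pPpmp x, pmmPp]
  -- canonical square root of |blockA B S|
  set mS : H →L[ℂ] H := mp + mm with hmS_def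
  have hmSnn : (0 : H →L[ℂ] H) ≤ mS := add_nonneg hmpnn hmmnn
  have hmSsa : IsSelfAdjoint mS :=
    ((ContinuousLinearMap.nonneg_iff_isPositive mS).mp hmSnn).isSelfAdjoint
  have hmS2 : mS * mS = ap + am := by
    rw [hmS_def]
    rw [add_mul, mul_add, mul_add, hmp2, hmm2, hmpmm, hmmmp]
    abel
  have hapam : ap * am = 0 := by
    rw [← hmp2, ← hmm2, mul_assoc, ← mul_assoc mp mm mm, hmpmm, zero_mul, mul_zero]
  have hamap : am * ap = 0 := by
    rw [← hmp2, ← hmm2, mul_assoc, ← mul_assoc mm mp mp, hmmmp, zero_mul, mul_zero]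
  have pblockA : ∀ x : H, blockA B S x = ap x - am x := by
    intro x
    show projL S (B (projL S x)) = _
    rw [pS x, map_add, map_add, pS (B (projL Sp x)), pS (B (projL Sm x)),
      pBz1, pBz2, pap, pam]
    abel
  have hblockA : blockA B S = ap - am := by
    ext x
    rw [ContinuousLinearMap.sub_apply]
    exact pblockA x
  have hasa : IsSelfAdjoint (blockA B S) := WCAux.sa_conj hB hPSsa
  have hmS4 : mS ^ 4 = adjoint (blockA B S) * blockA B S := by
    rw [← ContinuousLinearMap.star_eq_adjoint, hasa.star_eq, hblockA, WCAux.pow_four, hmS2]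
    rw [add_mul, mul_add, mul_add, sub_mul, mul_sub, mul_sub, hapam, hamap]
    abel
  have hmSsqrtabs : IsSqrtAbs (blockA B S) mS :=
    ⟨(ContinuousLinearMap.nonneg_iff_isPositive mS).mp hmSnn, hmS4⟩
  -- blockB facts
  have pbS : ∀ x : H, blockB B S x = projL S (B x) - projL S (B (projL S x)) := by
    intro x
    show projL S (B ((1 - projL S) x)) = _
    rw [ContinuousLinearMap.sub_apply, ContinuousLinearMap.one_apply, map_sub, map_sub]
  have pbSp : ∀ x : H, blockB B Sp x = projL Sp (blockB B S x) := by
    intro x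
    have hL : blockB B Sp x = projL Sp (B x) - projL Sp (B (projL Sp x)) := by
      show projL Sp (B ((1 - projL Sp) x)) = _
      rw [ContinuousLinearMap.sub_apply, ContinuousLinearMap.one_apply, map_sub, map_sub]
    have hR : projL Sp (blockB B S x) = projL Sp (B x) - projL Sp (B (projL Sp x)) := by
      rw [pbS x, map_sub, pPpS, pPpS, pS x, map_add, map_add, pBz2, add_zero]
    rw [hL, hR]
  have pbSm : ∀ x : H, blockB B Sm x = projL Sm (blockB B S x) := by
    intro x
    have hL : blockB B Sm x = projL Sm (B x) - projL Sm (B (projL Sm x)) := by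
      show projL Sm (B ((1 - projL Sm) x)) = _
      rw [ContinuousLinearMap.sub_apply, ContinuousLinearMap.one_apply, map_sub, map_sub]
    have hR : projL Sm (blockB B S x) = projL Sm (B x) - projL Sm (B (projL Sm x)) := by
      rw [pbS x, map_sub, pPmS, pPmS, pS x, map_add, map_add, pBz1, zero_add]
    rw [hL, hR]
  have hPSb : ∀ x : H, projL S (blockB B S x) = blockB B S x := by
    intro x
    rw [pbS x, map_sub, pSS, pSS]
  have hbPS : ∀ x : H, blockB B S (projL S x) = 0 := by
    intro x
    rw [pbS (projL S x), pSS x, sub_self]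
  have hstarbS : star (blockB B S) = (1 - projL S) * B * projL S := by
    show star (projL S * B * (1 - projL S)) = _
    rw [star_mul, star_mul, hB.star_eq, hPSsa.star_eq, star_sub, star_one,
      hPSsa.star_eq, ← mul_assoc]
  -- (i) → (ii)
  have himp12 : IsWeaklyComplementable B S →
      ∃ B1 B2 B3 : H →L[ℂ] H, IsSelfAdjoint B1 ∧ IsSelfAdjoint B2 ∧ IsSelfAdjoint B3 ∧
        B2.IsPositive ∧ B3.IsPositive ∧ B = B1 + B2 - B3 ∧
        S ≤ LinearMap.ker (B1 : H →ₗ[ℂ] H) ∧ Sm ≤ LinearMap.ker (B2 : H →ₗ[ℂ] H) ∧ Sp ≤ LinearMap.ker (B3 : H →ₗ[ℂ] H) := by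
    rintro ⟨m', hsq', hrange'⟩
    have hm'nn : (0 : H →L[ℂ] H) ≤ m' :=
      (ContinuousLinearMap.nonneg_iff_isPositive m').mpr hsq'.1
    have hm'sa : IsSelfAdjoint m' := hsq'.1.isSelfAdjoint
    have h4 : m' ^ 4 = mS ^ 4 := by rw [hsq'.2, hmS4]
    have h1 : (0 : H →L[ℂ] H) ≤ m' * m' := by
      have h := star_mul_self_nonneg m'
      rwa [hm'sa.star_eq] at h
    have h2 : (0 : H →L[ℂ] H) ≤ mS * mS := by
      have h := star_mul_self_nonneg mS
      rwa [hmSsa.star_eq] at h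
    have hsq : m' * m' = mS * mS := by
      apply WCAux.pos_sq_inj h1 h2
      calc m' * m' * (m' * m') = m' ^ 4 := (WCAux.pow_four m').symm
        _ = mS ^ 4 := h4
        _ = mS * mS * (mS * mS) := WCAux.pow_four mS
    have hm'eq : m' = mS := WCAux.pos_sq_inj hm'nn hmSnn hsq
    rw [hm'eq] at hrange'
    obtain ⟨f0, hf0⟩ := WCAux.exists_factor_of_range_le hrange'
    set f : H →L[ℂ] H := f0 * (1 - projL S) with hf_def
    have hmf : mS * f = blockB B S := by
      rw [hf_def, ← mul_assoc, hf0]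
      ext x
      show blockB B S ((1 - projL S) x) = blockB B S x
      rw [ContinuousLinearMap.sub_apply, ContinuousLinearMap.one_apply, map_sub,
        hbPS, sub_zero]
    have hfS : ∀ s, s ∈ S → f s = 0 := by
      intro s hs
      show f0 ((1 - projL S) s) = 0
      rw [ContinuousLinearMap.sub_apply, ContinuousLinearMap.one_apply,
        WCAux.projL_eq_self hs, sub_self, map_zero]
    set Dp : H →L[ℂ] H := mp + projL Sp * f with hDp_def
    set Dm : H →L[ℂ] H := mm - projL Sm * f with hDm_def
    have hB2nn : (0 : H →L[ℂ] H) ≤ star Dp * Dp := star_mul_self_nonneg Dp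
    have hB3nn : (0 : H →L[ℂ] H) ≤ star Dm * Dm := star_mul_self_nonneg Dm
    have hB2pos : (star Dp * Dp).IsPositive :=
      (ContinuousLinearMap.nonneg_iff_isPositive _).mp hB2nn
    have hB3pos : (star Dm * Dm).IsPositive :=
      (ContinuousLinearMap.nonneg_iff_isPositive _).mp hB3nn
    have hB2sa : IsSelfAdjoint (star Dp * Dp) := hB2pos.isSelfAdjoint
    have hB3sa : IsSelfAdjoint (star Dm * Dm) := hB3pos.isSelfAdjoint
    refine ⟨B - star Dp * Dp + star Dm * Dm, star Dp * Dp, star Dm * Dm,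
      (hB.sub hB2sa).add hB3sa, hB2sa, hB3sa, hB2pos, hB3pos, by abel, ?_, ?_, ?_⟩
    · -- S ≤ ker B1
      intro s hs
      rw [LinearMap.mem_ker, ContinuousLinearMap.coe_coe]
      have hfs : f s = 0 := hfS s hs
      have hDps : Dp s = mp s := by
        rw [hDp_def]
        show mp s + projL Sp (f s) = mp s
        rw [hfs, map_zero, add_zero]
      have hDms : Dm s = mm s := by
        rw [hDm_def]
        show mm s - projL Sm (f s) = mm s
        rw [hfs, map_zero, sub_zero]
      have hstarDp : (star Dp : H →L[ℂ] H) = mp + star f * projL Sp := by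
        rw [hDp_def, star_add, star_mul, hmpsa.star_eq, hPpsa.star_eq]
      have hstarDm : (star Dm : H →L[ℂ] H) = mm - star f * projL Sm := by
        rw [hDm_def, star_sub, star_mul, hmmsa.star_eq, hPmsa.star_eq]
      have hB2s : (star Dp * Dp) s = ap s + star f (mp s) := by
        rw [ContinuousLinearMap.mul_apply, hDps, hstarDp]
        show mp (mp s) + star f (projL Sp (mp s)) = ap s + star f (mp s)
        rw [pPpmp]
        congr 1
        calc mp (mp s) = (mp * mp) s := rfl
          _ = ap s := by rw [hmp2]
      have hB3s : (star Dm * Dm) s = am s - star f (mm s) := by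
        rw [ContinuousLinearMap.mul_apply, hDms, hstarDm]
        show mm (mm s) - star f (projL Sm (mm s)) = am s - star f (mm s)
        rw [pPmmm]
        congr 1
        calc mm (mm s) = (mm * mm) s := rfl
          _ = am s := by rw [hmm2]
      have hkey : ap s - am s + (star f (mp s) + star f (mm s)) = B s := by
        have k1 : ap s - am s = blockA B S s := (pblockA s).symm
        have k2 : star f (mp s) + star f (mm s) = star f (mS s) := by
          rw [hmS_def]
          show _ = star f (mp s + mm s)
          rw [map_add]
        have k3 : star f (mS s) = star (blockB B S) s := by
          have k3' : star f * mS = star (blockB B S) := by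
            rw [← hmf]
            conv_rhs => rw [star_mul]
            rw [hmSsa.star_eq]
          rw [← k3']
          rfl
        have k4 : star (blockB B S) s = B s - projL S (B s) := by
          rw [hstarbS]
          show (1 - projL S) (B (projL S s)) = _
          rw [WCAux.projL_eq_self hs, ContinuousLinearMap.sub_apply,
            ContinuousLinearMap.one_apply]
        have k5 : blockA B S s = projL S (B s) := by
          show projL S (B (projL S s)) = _
          rw [WCAux.projL_eq_self hs]
        rw [k1, k2, k3, k4, k5]
        abel
      rw [ContinuousLinearMap.add_apply, ContinuousLinearMap.sub_apply, hB2s, hB3s,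
        ← hkey]
      abel
    · -- Sm ≤ ker B2
      intro s hs
      rw [LinearMap.mem_ker, ContinuousLinearMap.coe_coe, ContinuousLinearMap.mul_apply]
      have h1' : Dp s = 0 := by
        rw [hDp_def]
        show mp s + projL Sp (f s) = 0
        rw [hfS s (hSmS hs), map_zero, add_zero]
        exact hmp0 s (WCAux.projL_eq_zero (hSmSp hs))
      rw [h1', map_zero]
    · -- Sp ≤ ker B3
      intro s hs
      rw [LinearMap.mem_ker, ContinuousLinearMap.coe_coe, ContinuousLinearMap.mul_apply]
      have h1' : Dm s = 0 := by
        rw [hDm_def]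
        show mm s - projL Sm (f s) = 0
        rw [hfS s (hSpS hs), map_zero, sub_zero]
        exact hmm0 s (WCAux.projL_eq_zero (hSpSm hs))
      rw [h1', map_zero]
  -- (ii) → (iii)
  have himp23 : (∃ B1 B2 B3 : H →L[ℂ] H, IsSelfAdjoint B1 ∧ IsSelfAdjoint B2 ∧
        IsSelfAdjoint B3 ∧ B2.IsPositive ∧ B3.IsPositive ∧ B = B1 + B2 - B3 ∧
        S ≤ LinearMap.ker (B1 : H →ₗ[ℂ] H) ∧ Sm ≤ LinearMap.ker (B2 : H →ₗ[ℂ] H) ∧ Sp ≤ LinearMap.ker (B3 : H →ₗ[ℂ] H)) →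
      ((Mminus B Spᗮ).Nonempty ∧ (Mplus B Smᗮ).Nonempty) := by
    rintro ⟨B1, B2, B3, h1sa, h2sa, h3sa, h2pos, h3pos, hsum, hkerS, hkerm, hkerp⟩
    constructor
    · refine ⟨B1 - B3, h1sa.sub h3sa, ?_, ?_⟩
      · have h : B - (B1 - B3) = B2 := by rw [hsum]; abel
        rw [h]
        exact h2pos
      · apply WCAux.range_le_orthogonal_of_ker (h1sa.sub h3sa)
        intro v hv
        have e1 : B1 v = 0 := hkerS (hSpS hv)
        have e2 : B3 v = 0 := hkerp hv
        rw [ContinuousLinearMap.sub_apply, e1, e2, sub_zero]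
    · refine ⟨B1 + B2, h1sa.add h2sa, ?_, ?_⟩
      · have h : B1 + B2 - B = B3 := by rw [hsum]; abel
        rw [h]
        exact h3pos
      · apply WCAux.range_le_orthogonal_of_ker (h1sa.add h2sa)
        intro v hv
        have e1 : B1 v = 0 := hkerS (hSmS hv)
        have e2 : B2 v = 0 := hkerm hv
        rw [ContinuousLinearMap.add_apply, e1, e2, add_zero]
  -- (iii) → (iv)
  have himp34 : ((Mminus B Spᗮ).Nonempty ∧ (Mplus B Smᗮ).Nonempty) →
      (IsWeaklyComplementable B Sp ∧ IsWeaklyComplementable B Sm) := by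
    rintro ⟨⟨X, hXsa, hBX, hXr⟩, ⟨Y, hYsa, hYB, hYr⟩⟩
    constructor
    · -- Sp
      have hPp0 : ∀ z : H, projL Sp (X z) = 0 :=
        fun z => WCAux.projL_eq_zero (hXr ⟨z, rfl⟩)
      have hA : blockA (B - X) Sp = blockA B Sp := by
        ext z
        show projL Sp ((B - X) (projL Sp z)) = projL Sp (B (projL Sp z))
        rw [ContinuousLinearMap.sub_apply, map_sub, hPp0, sub_zero]
      have hb : blockB (B - X) Sp = blockB B Sp := by
        ext z
        show projL Sp ((B - X) ((1 - projL Sp) z)) = projL Sp (B ((1 - projL Sp) z))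
        rw [ContinuousLinearMap.sub_apply, map_sub, hPp0, sub_zero]
      have hBXnn : (0 : H →L[ℂ] H) ≤ B - X :=
        (ContinuousLinearMap.nonneg_iff_isPositive _).mpr hBX
      obtain ⟨f, hf⟩ := WCAux.factor_of_nonneg hBXnn Sp
      rw [hA, hb] at hf
      have hblocknn : (0 : H →L[ℂ] H) ≤ blockA B Sp := by
        rw [← hA, ContinuousLinearMap.nonneg_iff_isPositive]
        have h := hBX.conj_adjoint (projL Sp)
        rwa [← ContinuousLinearMap.star_eq_adjoint, hPpsa.star_eq] at h
      have hs2 : CFC.sqrt (blockA B Sp) * CFC.sqrt (blockA B Sp) = blockA B Sp :=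
        CFC.sqrt_mul_sqrt_self _ hblocknn
      have hassa' : IsSelfAdjoint (blockA B Sp) := WCAux.sa_conj hB hPpsa
      refine ⟨CFC.sqrt (blockA B Sp),
        ⟨(ContinuousLinearMap.nonneg_iff_isPositive _).mp (CFC.sqrt_nonneg _), ?_⟩,
        WCAux.range_le_of_factor hf⟩
      rw [← ContinuousLinearMap.star_eq_adjoint, hassa'.star_eq, WCAux.pow_four, hs2]
    · -- Sm
      have hPm0 : ∀ z : H, projL Sm (Y z) = 0 :=
        fun z => WCAux.projL_eq_zero (hYr ⟨z, rfl⟩)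
      have hA : blockA (Y - B) Sm = -(blockA B Sm) := by
        ext z
        show projL Sm ((Y - B) (projL Sm z)) = (-(blockA B Sm)) z
        rw [ContinuousLinearMap.sub_apply, map_sub, hPm0, zero_sub,
          ContinuousLinearMap.neg_apply]
        rfl
      have hb : blockB (Y - B) Sm = -(blockB B Sm) := by
        ext z
        show projL Sm ((Y - B) ((1 - projL Sm) z)) = (-(blockB B Sm)) z
        rw [ContinuousLinearMap.sub_apply, map_sub, hPm0, zero_sub,
          ContinuousLinearMap.neg_apply]
        rfl
      have hYBnn : (0 : H →L[ℂ] H) ≤ Y - B :=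
        (ContinuousLinearMap.nonneg_iff_isPositive _).mpr hYB
      obtain ⟨f, hf⟩ := WCAux.factor_of_nonneg hYBnn Sm
      rw [hA, hb] at hf
      have hf' : CFC.sqrt (-(blockA B Sm)) * (-f) = blockB B Sm := by
        rw [mul_neg, hf, neg_neg]
      have hblocknn : (0 : H →L[ℂ] H) ≤ -(blockA B Sm) := by
        rw [← hA, ContinuousLinearMap.nonneg_iff_isPositive]
        have h := hYB.conj_adjoint (projL Sm)
        rwa [← ContinuousLinearMap.star_eq_adjoint, hPmsa.star_eq] at h
      have hs2 : CFC.sqrt (-(blockA B Sm)) * CFC.sqrt (-(blockA B Sm)) = -(blockA B Sm) :=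
        CFC.sqrt_mul_sqrt_self _ hblocknn
      have hassa' : IsSelfAdjoint (blockA B Sm) := WCAux.sa_conj hB hPmsa
      refine ⟨CFC.sqrt (-(blockA B Sm)),
        ⟨(ContinuousLinearMap.nonneg_iff_isPositive _).mp (CFC.sqrt_nonneg _), ?_⟩,
        WCAux.range_le_of_factor hf'⟩
      rw [← ContinuousLinearMap.star_eq_adjoint, hassa'.star_eq, WCAux.pow_four, hs2,
        neg_mul_neg]
  -- (iv) → (i)
  have himp41 : (IsWeaklyComplementable B Sp ∧ IsWeaklyComplementable B Sm) →
      IsWeaklyComplementable B S := by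
    rintro ⟨⟨m1, hsq1, hr1⟩, ⟨m2, hsq2, hr2⟩⟩
    have hassa1 : IsSelfAdjoint (blockA B Sp) := WCAux.sa_conj hB hPpsa
    have hassa2 : IsSelfAdjoint (blockA B Sm) := WCAux.sa_conj hB hPmsa
    -- m1 = mp
    have hm1nn : (0 : H →L[ℂ] H) ≤ m1 :=
      (ContinuousLinearMap.nonneg_iff_isPositive m1).mpr hsq1.1
    have hm1sa : IsSelfAdjoint m1 := hsq1.1.isSelfAdjoint
    have h4p : m1 ^ 4 = mp ^ 4 := by
      rw [hsq1.2, ← ContinuousLinearMap.star_eq_adjoint, hassa1.star_eq,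
        WCAux.pow_four, hmp2, ← hap_def]
    have h1 : (0 : H →L[ℂ] H) ≤ m1 * m1 := by
      have h := star_mul_self_nonneg m1
      rwa [hm1sa.star_eq] at h
    have h2 : (0 : H →L[ℂ] H) ≤ mp * mp := by
      have h := star_mul_self_nonneg mp
      rwa [hmpsa.star_eq] at h
    have hm1eq : m1 = mp := by
      apply WCAux.pos_sq_inj hm1nn hmpnn
      apply WCAux.pos_sq_inj h1 h2
      calc m1 * m1 * (m1 * m1) = m1 ^ 4 := (WCAux.pow_four m1).symm
        _ = mp ^ 4 := h4p
        _ = mp * mp * (mp * mp) := WCAux.pow_four mp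
    -- m2 = mm
    have hm2nn : (0 : H →L[ℂ] H) ≤ m2 :=
      (ContinuousLinearMap.nonneg_iff_isPositive m2).mpr hsq2.1
    have hm2sa : IsSelfAdjoint m2 := hsq2.1.isSelfAdjoint
    have h4m : m2 ^ 4 = mm ^ 4 := by
      rw [hsq2.2, ← ContinuousLinearMap.star_eq_adjoint, hassa2.star_eq,
        WCAux.pow_four, hmm2]
      have : blockA B Sm = -am := by rw [ham_def, neg_neg]
      rw [this, neg_mul_neg]
    have h1' : (0 : H →L[ℂ] H) ≤ m2 * m2 := by
      have h := star_mul_self_nonneg m2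
      rwa [hm2sa.star_eq] at h
    have h2' : (0 : H →L[ℂ] H) ≤ mm * mm := by
      have h := star_mul_self_nonneg mm
      rwa [hmmsa.star_eq] at h
    have hm2eq : m2 = mm := by
      apply WCAux.pos_sq_inj hm2nn hmmnn
      apply WCAux.pos_sq_inj h1' h2'
      calc m2 * m2 * (m2 * m2) = m2 ^ 4 := (WCAux.pow_four m2).symm
        _ = mm ^ 4 := h4m
        _ = mm * mm * (mm * mm) := WCAux.pow_four mm
    rw [hm1eq] at hr1
    rw [hm2eq] at hr2
    obtain ⟨f1, hf1⟩ := WCAux.exists_factor_of_range_le hr1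
    obtain ⟨f2, hf2⟩ := WCAux.exists_factor_of_range_le hr2
    have hmSPp : mS * projL Sp = mp := by
      ext x
      show mS (projL Sp x) = mp x
      rw [hmS_def]
      show mp (projL Sp x) + mm (projL Sp x) = mp x
      rw [pmpPp, pmmPp, add_zero]
    have hmSPm : mS * projL Sm = mm := by
      ext x
      show mS (projL Sm x) = mm x
      rw [hmS_def]
      show mp (projL Sm x) + mm (projL Sm x) = mm x
      rw [pmpPm, pmmPm, zero_add]
    have hbsplit : blockB B Sp + blockB B Sm = blockB B S := by
      ext x
      rw [ContinuousLinearMap.add_apply, pbSp x, pbSm x, ← pS (blockB B S x), hPSb]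
    refine ⟨mS, hmSsqrtabs, WCAux.range_le_of_factor
      (g := projL Sp * f1 + projL Sm * f2) ?_⟩
    calc mS * (projL Sp * f1 + projL Sm * f2)
        = (mS * projL Sp) * f1 + (mS * projL Sm) * f2 := by
          rw [mul_add, ← mul_assoc, ← mul_assoc]
      _ = blockB B Sp + blockB B Sm := by rw [hmSPp, hmSPm, hf1, hf2]
      _ = blockB B S := hbsplit
  exact ⟨⟨himp12, fun h => himp41 (himp34 (himp23 h))⟩,
    ⟨fun h => himp23 (himp12 h), fun h => himp41 (himp34 h)⟩,
    ⟨fun h => himp34 (himp23 (himp12 h)), himp41⟩⟩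
end
end

section
/- Let B be a bounded selfadjoint operator on a complex Hilbert space H and S a closed subspace of H. Then the following are equivalent: (i) S is B-nonnegative (⟨Bs,s⟩ ≥ 0 for all s ∈ S) and B is S-weakly complementable; (ii) there exist selfadjoint B1, B2 ∈ L(H) with B2 positive, B = B1 + B2, and S ⊆ N(B1); (iii) the set M^−(B, S^⊥) is non-empty; (iv) the set M^−(B, S^⊥) has a maximum element in the Loewner order. Moreover, in this case max M^−(B, S^⊥) = B_{/S}. -/
open ContinuousLinearMap

noncomputable section

variable {H : Type*} [NormedAddCommGroup H] [InnerProductSpace ℂ H] [CompleteSpace H]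

set_option linter.unusedSectionVars false
set_option maxHeartbeats 1000000
set_option synthInstance.maxHeartbeats 1000000

local notation "⟪" x ", " y "⟫" => @inner ℂ _ _ x y

lemma inner_sa_left {A : H →L[ℂ] H} (hA : adjoint A = A) (x y : H) :
    ⟪A x, y⟫ = ⟪x, A y⟫ := by
  have := adjoint_inner_left A y x
  rwa [hA] at this

lemma inner_adj_right (T : H →L[ℂ] H) (v x : H) : ⟪T v, x⟫ = ⟪v, adjoint T x⟫ :=
  (adjoint_inner_right T v x).symm

lemma re_inner_self (x : H) : (⟪x, x⟫).re = ‖x‖ ^ 2 := by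
  have := @inner_self_eq_norm_sq ℂ _ _ _ _ x
  simpa using this


lemma orth_range_eq_ker (m : H →L[ℂ] H) (hm : adjoint m = m) :
    (LinearMap.range (m : H →ₗ[ℂ] H))ᗮ = LinearMap.ker (m : H →ₗ[ℂ] H) := by
  ext x
  simp only [Submodule.mem_orthogonal, LinearMap.mem_range, LinearMap.mem_ker,
    forall_exists_index, ContinuousLinearMap.coe_coe]
  constructor
  · intro h
    have h2 : ∀ y : H, ⟪y, m x⟫ = 0 := by
      intro y
      have := h (m y) y rfl
      rwa [inner_sa_left hm] at this
    simpa using h2 (m x)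
  · intro h u y hy
    subst hy
    rw [inner_sa_left hm, h, inner_zero_right]

lemma closure_range_eq_orth_ker (m : H →L[ℂ] H) (hm : adjoint m = m) :
    (LinearMap.range (m : H →ₗ[ℂ] H)).topologicalClosure = (LinearMap.ker (m : H →ₗ[ℂ] H))ᗮ := by
  rw [← orth_range_eq_ker m hm, Submodule.orthogonal_orthogonal_eq_closure]


/-- Douglas-type lemma: if `A` is selfadjoint with `A * A = T * T⋆`, then
`range T ⊆ range A`. -/
lemma range_le_range_of_sq_eq (T A : H →L[ℂ] H) (hA : adjoint A = A)
    (h : A * A = T * adjoint T) : LinearMap.range (T : H →ₗ[ℂ] H) ≤ LinearMap.range (A : H →ₗ[ℂ] H) := by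
  rintro _ ⟨v, rfl⟩
  have hnorm : ∀ x : H, ‖adjoint T x‖ = ‖A x‖ := by
    intro x
    have h1 : ⟪A (A x), x⟫ = ⟪T (adjoint T x), x⟫ := by
      have := congrArg (fun s : H →L[ℂ] H => ⟪s x, x⟫) h
      simpa using this
    rw [inner_sa_left hA (A x) x, inner_adj_right T (adjoint T x) x] at h1
    have h2 := congrArg Complex.re h1
    rw [re_inner_self, re_inner_self] at h2
    nlinarith [norm_nonneg (A x), norm_nonneg (adjoint T x)]
  have hkey : ∀ x x' : H, A x = A x' → ⟪T v, x⟫ = ⟪T v, x'⟫ := by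
    intro x x' hxx
    have h0 : adjoint T (x - x') = 0 := by
      have : ‖adjoint T (x - x')‖ = 0 := by rw [hnorm, map_sub, sub_eq_zero.2 hxx, norm_zero]
      simpa using this
    have : ⟪T v, x - x'⟫ = 0 := by
      rw [inner_adj_right, h0, inner_zero_right]
    rw [inner_sub_right, sub_eq_zero] at this
    exact this
  set M : Submodule ℂ H := LinearMap.range (A : H →ₗ[ℂ] H) with hM
  have hmem : ∀ w : M, (w : H) ∈ LinearMap.range (A : H →ₗ[ℂ] H) := fun w => w.2
  let pre : M → H := fun w => Classical.choose (hmem w)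
  have hpre : ∀ w : M, A (pre w) = (w : H) := fun w => Classical.choose_spec (hmem w)
  let φ : M →ₗ[ℂ] ℂ :=
    { toFun := fun w => ⟪T v, pre w⟫
      map_add' := by
        intro w w'
        have hheq : A (pre (w + w')) = A (pre w + pre w') := by
          rw [map_add, hpre, hpre, hpre]; rfl
        rw [hkey _ _ hheq, inner_add_right]
      map_smul' := by
        intro c w
        have hheq : A (pre (c • w)) = A (c • pre w) := by
          rw [map_smul, hpre, hpre]; rfl
        rw [hkey _ _ hheq, inner_smul_right]
        rfl }
  have hφbound : ∀ w : M, ‖φ w‖ ≤ ‖v‖ * ‖w‖ := by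
    intro w
    have hφw : φ w = ⟪v, adjoint T (pre w)⟫ := inner_adj_right T v (pre w)
    rw [hφw]
    calc ‖⟪v, adjoint T (pre w)⟫‖ ≤ ‖v‖ * ‖adjoint T (pre w)‖ := norm_inner_le_norm _ _
      _ = ‖v‖ * ‖A (pre w)‖ := by rw [hnorm]
      _ = ‖v‖ * ‖w‖ := by rw [hpre w]; rfl
  let φc : M →L[ℂ] ℂ := LinearMap.mkContinuous φ ‖v‖ hφbound
  obtain ⟨g, hg, -⟩ := exists_extension_norm_eq M φc
  set z : H := (InnerProductSpace.toDual ℂ H).symm g with hz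
  have hzg : ∀ w : H, ⟪z, w⟫ = g w := by
    intro w
    rw [hz]
    exact InnerProductSpace.toDual_symm_apply
  have hAz : ∀ x : H, ⟪A z, x⟫ = ⟪T v, x⟫ := by
    intro x
    have h1 : ⟪z, A x⟫ = g (A x) := hzg _
    have h2 : g (A x) = φc ⟨A x, ⟨x, rfl⟩⟩ := hg ⟨A x, ⟨x, rfl⟩⟩
    have h3 : φc (⟨A x, ⟨x, rfl⟩⟩ : M) = ⟪T v, pre ⟨A x, ⟨x, rfl⟩⟩⟫ := rfl
    have h4 : ⟪T v, pre ⟨A x, ⟨x, rfl⟩⟩⟫ = ⟪T v, x⟫ :=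
      hkey _ _ (by rw [hpre])
    rw [inner_sa_left hA, h1, h2, h3, h4]
  have hfin : A z = T v := by
    have h0 := hAz (A z - T v)
    have : ⟪A z - T v, A z - T v⟫ = 0 := by rw [inner_sub_left, h0, sub_self]
    rwa [inner_self_eq_zero, sub_eq_zero] at this
  exact ⟨z, hfin⟩

section projLsec


variable (S : Submodule ℂ H) [CompleteSpace S]

lemma projL_apply (x : H) : projL S x = (S.orthogonalProjectionOnto x : H) := rfl

lemma projL_mem (x : H) : projL S x ∈ S := (S.orthogonalProjectionOnto x).2

lemma projL_of_mem {x : H} (hx : x ∈ S) : projL S x = x := by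
  exact (S.starProjection_eq_self_iff).2 hx

lemma projL_of_orth {x : H} (hx : x ∈ Sᗮ) : projL S x = 0 := by
  simp [projL_apply, Submodule.orthogonalProjectionOnto_apply_of_mem_orthogonal hx]

lemma adjoint_projL : adjoint (projL S) = projL S :=
  isSelfAdjoint_iff'.1 (isSelfAdjoint_starProjection S)

lemma projL_idem : projL S * projL S = projL S := by
  ext x
  show projL S (projL S x) = projL S x
  exact projL_of_mem S (projL_mem S x)

lemma one_sub_projL_mem (x : H) : (1 - projL S) x ∈ Sᗮ := by
  have := Submodule.sub_starProjection_mem_orthogonal (K := S) x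
  simpa [sub_apply, projL_apply] using this

end projLsec

/-- Reduced solution of `m x = b` when `range b ≤ range m`, `m` selfadjoint. -/
lemma reduced_solution (m b : H →L[ℂ] H) (hm : adjoint m = m)
    (hr : LinearMap.range (b : H →ₗ[ℂ] H) ≤ LinearMap.range (m : H →ₗ[ℂ] H)) :
    ∃ f : H →L[ℂ] H, m * f = b ∧ LinearMap.range (f : H →ₗ[ℂ] H) ≤ (LinearMap.ker (m : H →ₗ[ℂ] H))ᗮ := by
  haveI : CompleteSpace (LinearMap.ker (m : H →ₗ[ℂ] H)) := (isClosed_ker m).completeSpace_coe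
  set K : Submodule ℂ H := (LinearMap.ker (m : H →ₗ[ℂ] H))ᗮ with hK
  have hKorth : Kᗮ = LinearMap.ker (m : H →ₗ[ℂ] H) := Submodule.orthogonal_orthogonal _
  haveI : CompleteSpace K := (LinearMap.ker (m : H →ₗ[ℂ] H)).isClosed_orthogonal.completeSpace_coe
  have uniq : ∀ z z' : H, z ∈ K → z' ∈ K → m z = m z' → z = z' := by
    intro z z' hz hz' hmz
    have hsub : z - z' ∈ K := K.sub_mem hz hz'
    have hker : z - z' ∈ LinearMap.ker (m : H →ₗ[ℂ] H) := by
      rw [LinearMap.mem_ker, map_sub, sub_eq_zero]; exact hmz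
    have : ⟪z - z', z - z'⟫ = 0 := hsub _ hker
    rwa [inner_self_eq_zero, sub_eq_zero] at this
  have spec : ∀ x : H, b x ∈ LinearMap.range (m : H →ₗ[ℂ] H) := fun x => hr ⟨x, rfl⟩
  let sol : H → H := fun x => projL K (Classical.choose (spec x))
  have hsol_mem : ∀ x, sol x ∈ K := fun x => projL_mem K _
  have hsol : ∀ x, m (sol x) = b x := by
    intro x
    have hw : m (Classical.choose (spec x)) = b x := Classical.choose_spec (spec x)
    set w := Classical.choose (spec x) with hwdef
    have h1 : w - projL K w ∈ Kᗮ := by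
      have := Submodule.sub_starProjection_mem_orthogonal (K := K) w
      simpa [projL_apply] using this
    rw [hKorth] at h1
    have h2 : m (w - projL K w) = 0 := h1
    rw [map_sub, sub_eq_zero] at h2
    rw [show sol x = projL K w from rfl, ← h2, hw]
  have hadd : ∀ x y, sol (x + y) = sol x + sol y := by
    intro x y
    refine uniq _ _ (hsol_mem _) (K.add_mem (hsol_mem x) (hsol_mem y)) ?_
    rw [map_add, hsol, hsol, hsol, map_add]
  have hsmul : ∀ (c : ℂ) x, sol (c • x) = c • sol x := by
    intro c x
    refine uniq _ _ (hsol_mem _) (K.smul_mem c (hsol_mem x)) ?_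
    rw [map_smul, hsol, hsol, map_smul]
  let f₀ : H →ₗ[ℂ] H := { toFun := sol, map_add' := hadd, map_smul' := hsmul }
  have hcont : Continuous f₀ := by
    apply LinearMap.continuous_of_seq_closed_graph
    intro u x y hu hy
    have h1 : Filter.Tendsto (m ∘ f₀ ∘ u) Filter.atTop (nhds (m y)) :=
      (m.continuous.tendsto y).comp hy
    have h2 : (m ∘ f₀ ∘ u) = b ∘ u := by
      funext n; exact hsol (u n)
    have h3 : Filter.Tendsto (b ∘ u) Filter.atTop (nhds (b x)) :=
      (b.continuous.tendsto x).comp hu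
    have hmy : m y = b x := by
      rw [h2] at h1
      exact tendsto_nhds_unique h1 h3
    have hyK : y ∈ K := by
      have : IsClosed (K : Set H) := (LinearMap.ker (m : H →ₗ[ℂ] H)).isClosed_orthogonal
      exact this.mem_of_tendsto hy (Filter.Eventually.of_forall fun n => hsol_mem (u n))
    exact uniq y (f₀ x) hyK (hsol_mem x) (by rw [hmy]; exact (hsol x).symm)
  refine ⟨⟨f₀, hcont⟩, ?_, ?_⟩
  · ext x; exact hsol x
  · rintro _ ⟨x, rfl⟩; exact hsol_mem x

section blocks

variable (B : H →L[ℂ] H) (S : Submodule ℂ H) [CompleteSpace S]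

lemma star_projL : star (projL S) = projL S := by
  rw [star_eq_adjoint]; exact adjoint_projL S

lemma apply_eq_zero_of_range_le_orth {X : H →L[ℂ] H} (hXsa : IsSelfAdjoint X)
    (hXr : LinearMap.range (X : H →ₗ[ℂ] H) ≤ Sᗮ) {s : H} (hs : s ∈ S) : X s = 0 := by
  have hXadj : adjoint X = X := isSelfAdjoint_iff'.1 hXsa
  have h1 : ⟪X s, X s⟫ = ⟪s, X (X s)⟫ := inner_sa_left hXadj s (X s)
  have h2 : X (X s) ∈ Sᗮ := hXr ⟨X s, rfl⟩
  have h3 : ⟪s, X (X s)⟫ = 0 := h2 s hs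
  rw [h3, inner_self_eq_zero] at h1
  exact h1

lemma proj_comp_eq_zero {X : H →L[ℂ] H} (hXr : LinearMap.range (X : H →ₗ[ℂ] H) ≤ Sᗮ) :
    projL S * X = 0 := by
  ext x
  show projL S (X x) = 0
  exact projL_of_orth S (hXr ⟨x, rfl⟩)

lemma comp_proj_eq_zero {X : H →L[ℂ] H} (hXsa : IsSelfAdjoint X)
    (hXr : LinearMap.range (X : H →ₗ[ℂ] H) ≤ Sᗮ) : X * projL S = 0 := by
  have h := proj_comp_eq_zero (X := X) S hXr
  have h2 := congrArg star h
  rwa [star_mul, star_projL, hXsa.star_eq, star_zero] at h2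

lemma star_blockA (hB : IsSelfAdjoint B) : star (blockA B S) = blockA B S := by
  rw [blockA, star_mul, star_mul, star_projL, hB.star_eq, mul_assoc]

lemma adjoint_blockA (hB : IsSelfAdjoint B) : adjoint (blockA B S) = blockA B S := by
  rw [← star_eq_adjoint]; exact star_blockA B S hB

lemma star_one_sub_projL : star (1 - projL S) = 1 - projL S := by
  rw [star_sub, star_one, star_projL]

lemma adjoint_blockB (hB : IsSelfAdjoint B) :
    adjoint (blockB B S) = (1 - projL S) * B * projL S := by
  rw [← star_eq_adjoint, blockB, star_mul, star_mul, star_one_sub_projL, hB.star_eq,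
    star_projL, mul_assoc]

lemma star_blockC (hB : IsSelfAdjoint B) : star (blockC B S) = blockC B S := by
  rw [blockC, star_mul, star_mul, star_one_sub_projL, hB.star_eq, mul_assoc]

lemma decomp (hB : IsSelfAdjoint B) :
    B = blockA B S + blockB B S + (1 - projL S) * B * projL S + blockC B S := by
  rw [blockA, blockB, blockC]
  noncomm_ring

lemma blockB_comp_proj : blockB B S * projL S = 0 := by
  rw [blockB, mul_assoc, sub_mul, one_mul, projL_idem, sub_self, mul_zero]

lemma blockA_isPositive (hB : IsSelfAdjoint B)
    (hpos : ∀ s ∈ S, 0 ≤ (inner ℂ (B s) s : ℂ).re) : (blockA B S).IsPositive := by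
  constructor
  · exact isSelfAdjoint_iff_isSymmetric.1 (star_blockA B S hB)
  · intro x
    show 0 ≤ (⟪(blockA B S) x, x⟫).re
    have h1 : (blockA B S) x = projL S (B (projL S x)) := rfl
    have h2 : ⟪projL S (B (projL S x)), x⟫ = ⟪B (projL S x), projL S x⟫ :=
      inner_sa_left (adjoint_projL S) (B (projL S x)) x
    rw [h1, h2]
    exact hpos _ (projL_mem S x)

lemma ker_blockA_orth_le (hB : IsSelfAdjoint B) : (LinearMap.ker (blockA B S : H →ₗ[ℂ] H))ᗮ ≤ S := by
  have h1 : Sᗮ ≤ LinearMap.ker (blockA B S : H →ₗ[ℂ] H) := by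
    intro x hx
    rw [LinearMap.mem_ker]
    show projL S (B (projL S x)) = 0
    rw [projL_of_orth S hx, map_zero, map_zero]
  calc (LinearMap.ker (blockA B S : H →ₗ[ℂ] H))ᗮ ≤ Sᗮᗮ := Submodule.orthogonal_le h1
    _ = S := Submodule.orthogonal_orthogonal S

lemma adj_mul_self_isPositive (L : H →L[ℂ] H) : (adjoint L * L).IsPositive := by
  constructor
  · refine isSelfAdjoint_iff_isSymmetric.1 ?_
    rw [IsSelfAdjoint, star_mul, star_eq_adjoint, star_eq_adjoint, adjoint_adjoint]
  · intro x
    show 0 ≤ (⟪adjoint L (L x), x⟫).re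
    rw [adjoint_inner_left]
    exact inner_self_nonneg (𝕜 := ℂ) (x := L x)

end blocks


lemma of_nonempty (B : H →L[ℂ] H) (hB : IsSelfAdjoint B) (S : Submodule ℂ H) [CompleteSpace S]
    (hne : (Mminus B Sᗮ).Nonempty) :
    (∀ s ∈ S, 0 ≤ (inner ℂ (B s) s : ℂ).re) ∧ IsWeaklyComplementable B S := by
  obtain ⟨X, hXsa, hDpos, hXr⟩ := hne
  have hXP : X * projL S = 0 := comp_proj_eq_zero S hXsa hXr
  have hPX : projL S * X = 0 := proj_comp_eq_zero S hXr
  have hpart1 : ∀ s ∈ S, 0 ≤ (inner ℂ (B s) s : ℂ).re := by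
    intro s hs
    have h0 := hDpos.2 s
    have hXs : X s = 0 := apply_eq_zero_of_range_le_orth S hXsa hXr hs
    have h1 : (B - X) s = B s := by rw [sub_apply, hXs, sub_zero]
    rw [ContinuousLinearMap.reApplyInnerSelf, h1] at h0
    exact h0
  refine ⟨hpart1, ?_⟩
  -- weak complementability
  set P := projL S with hPdef
  set D := B - X with hDdef
  have hDadj : adjoint D = D := isSelfAdjoint_iff'.1 hDpos.isSelfAdjoint
  have hPDP : P * D * P = blockA B S := by
    rw [hDdef, mul_sub, sub_mul, blockA]
    have : P * X * P = 0 := by rw [hPX, zero_mul]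
    rw [this, sub_zero]
  have hPDQ : P * D * (1 - P) = blockB B S := by
    have h1 : P * (B - X) * (1 - P) = P * B * (1 - P) - (P * X) * (1 - P) := by noncomm_ring
    rw [hDdef, blockB, h1, hPX, zero_mul, sub_zero]
  have hapos : (blockA B S).IsPositive := blockA_isPositive B S hB hpart1
  have haadj : adjoint (blockA B S) = blockA B S := adjoint_blockA B S hB
  have h0a : (0 : H →L[ℂ] H) ≤ blockA B S := (nonneg_iff_isPositive _).2 hapos
  have h0D : (0 : H →L[ℂ] H) ≤ D := (nonneg_iff_isPositive _).2 hDpos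
  set r := CFC.sqrt D with hrdef
  have hrr : r * r = D := CFC.sqrt_mul_sqrt_self D h0D
  have h0r : (0 : H →L[ℂ] H) ≤ r := CFC.sqrt_nonneg _
  have hradj : adjoint r = r := isSelfAdjoint_iff'.1 ((nonneg_iff_isPositive r).1 h0r).isSelfAdjoint
  set m := CFC.sqrt (blockA B S) with hmdef
  have hmm : m * m = blockA B S := CFC.sqrt_mul_sqrt_self _ h0a
  have h0m : (0 : H →L[ℂ] H) ≤ m := CFC.sqrt_nonneg _
  have hmpos : m.IsPositive := (nonneg_iff_isPositive m).1 h0m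
  have hmadj : adjoint m = m := isSelfAdjoint_iff'.1 hmpos.isSelfAdjoint
  have hsqrt : IsSqrtAbs (blockA B S) m := by
    refine ⟨hmpos, ?_⟩
    rw [haadj, show (4:ℕ) = 2*2 from rfl, pow_mul, pow_two, pow_two, hmm]
  set T := P * r with hTdef
  have hTadj : adjoint T = r * P := by
    rw [← star_eq_adjoint, hTdef, star_mul, star_eq_adjoint, star_eq_adjoint, hradj,
      adjoint_projL]
  have hTT : m * m = T * adjoint T := by
    rw [hTadj, hmm, ← hPDP, ← hrr]
    noncomm_ring
  have hdoug : LinearMap.range (T : H →ₗ[ℂ] H) ≤ LinearMap.range (m : H →ₗ[ℂ] H) :=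
    range_le_range_of_sq_eq T m hmadj hTT
  have hbT : blockB B S = T * (r * (1 - P)) := by
    rw [← hPDQ, ← hrr, hTdef]
    noncomm_ring
  refine ⟨m, hsqrt, ?_⟩
  rintro _ ⟨x, rfl⟩
  have : blockB B S x = T ((r * (1 - P)) x) := by rw [hbT]; rfl
  rw [ContinuousLinearMap.coe_coe, this]
  exact hdoug ⟨_, rfl⟩


lemma main_construction (B : H →L[ℂ] H) (hB : IsSelfAdjoint B)
    (S : Submodule ℂ H) [CompleteSpace S]
    (hpos : ∀ s ∈ S, 0 ≤ (inner ℂ (B s) s : ℂ).re)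
    (hwc : IsWeaklyComplementable B S) :
    ∃ Y : H →L[ℂ] H, IsMaxOf (Mminus B Sᗮ) Y ∧ IsSchur B S Y := by
  obtain ⟨m, ⟨hmpos, hm4⟩, hrange⟩ := hwc
  set P := projL S with hPdef
  have hPadj : adjoint P = P := adjoint_projL S
  have hmadj : adjoint m = m := isSelfAdjoint_iff'.1 hmpos.isSelfAdjoint
  have hmstar : star m = m := hmpos.isSelfAdjoint
  have hapos : (blockA B S).IsPositive := blockA_isPositive B S hB hpos
  have haadj : adjoint (blockA B S) = blockA B S := adjoint_blockA B S hB
  have h0a : (0 : H →L[ℂ] H) ≤ blockA B S := (nonneg_iff_isPositive _).2 hapos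
  have h0m : (0 : H →L[ℂ] H) ≤ m := (nonneg_iff_isPositive _).2 hmpos
  -- m * m = a
  have h0mm : (0 : H →L[ℂ] H) ≤ m * m := by
    have := star_mul_self_nonneg m
    rwa [hmstar] at this
  have hm2 : m * m = blockA B S := by
    have h1 : (m * m) * (m * m) = blockA B S * blockA B S := by
      rw [← pow_two, ← pow_two, ← pow_mul]
      rw [haadj] at hm4
      exact hm4
    rw [← CFC.sqrt_unique h1 h0mm, CFC.sqrt_mul_self _ h0a]
  -- kernels
  have hker : LinearMap.ker (m : H →ₗ[ℂ] H) = LinearMap.ker (blockA B S : H →ₗ[ℂ] H) := by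
    ext x
    simp only [LinearMap.mem_ker, ContinuousLinearMap.coe_coe]
    constructor
    · intro h
      rw [← hm2]
      show m (m x) = 0
      rw [h, map_zero]
    · intro h
      have h1 : ⟪(blockA B S) x, x⟫ = ⟪m x, m x⟫ := by
        rw [← hm2]
        exact inner_sa_left hmadj (m x) x
      rw [h, inner_zero_left] at h1
      exact inner_self_eq_zero.1 h1.symm
  have hKS : (LinearMap.ker (blockA B S : H →ₗ[ℂ] H))ᗮ ≤ S := ker_blockA_orth_le B S hB
  -- reduced solution
  obtain ⟨f, hmf, hfK⟩ := reduced_solution m (blockB B S) hmadj hrange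
  have hfmem : ∀ x, f x ∈ (LinearMap.ker (blockA B S : H →ₗ[ℂ] H))ᗮ := by
    intro x
    rw [← hker]
    exact hfK ⟨x, rfl⟩
  have hfS : ∀ x, f x ∈ S := fun x => hKS (hfmem x)
  have hfzero : ∀ s ∈ S, f s = 0 := by
    intro s hs
    have h1 : blockB B S s = 0 := by
      have h2 : (blockB B S * P) s = blockB B S s := by
        show blockB B S (P s) = _
        rw [hPdef, projL_of_mem S hs]
      rw [blockB_comp_proj] at h2
      exact h2.symm ▸ rfl
    have h3 : m (f s) = 0 := by
      have : m (f s) = blockB B S s := by rw [← hmf]; rfl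
      rw [this, h1]
    have h4 : f s ∈ LinearMap.ker (m : H →ₗ[ℂ] H) := h3
    have h5 := hfK ⟨s, rfl⟩
    have h6 : ⟪f s, f s⟫ = 0 := h5 (f s) h4
    exact inner_self_eq_zero.1 h6
  -- the partial isometry u
  haveI : CompleteSpace (LinearMap.ker (blockA B S : H →ₗ[ℂ] H)) :=
    (isClosed_ker (blockA B S)).completeSpace_coe
  set W : Submodule ℂ H := (LinearMap.ker (blockA B S : H →ₗ[ℂ] H))ᗮ with hWdef
  haveI : CompleteSpace W := (LinearMap.ker (blockA B S : H →ₗ[ℂ] H)).isClosed_orthogonal.completeSpace_coe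
  set u := projL W with hudef
  have hWorth : Wᗮ = LinearMap.ker (blockA B S : H →ₗ[ℂ] H) := Submodule.orthogonal_orthogonal _
  have hkeru : LinearMap.ker (u : H →ₗ[ℂ] H) = LinearMap.ker (blockA B S : H →ₗ[ℂ] H) := by
    ext x
    simp only [LinearMap.mem_ker, ContinuousLinearMap.coe_coe]
    constructor
    · intro h
      have h1 : x - u x ∈ Wᗮ := by
        have := Submodule.sub_starProjection_mem_orthogonal (K := W) x
        simpa [hudef, projL_apply] using this
      rw [h, sub_zero, hWorth] at h1
      exact h1
    · intro h
      rw [hudef]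
      exact projL_of_orth W (hWorth ▸ h : x ∈ Wᗮ)
  have hisom : ∀ x ∈ (LinearMap.ker (blockA B S : H →ₗ[ℂ] H))ᗮ, ‖u x‖ = ‖x‖ := by
    intro x hx
    rw [hudef, projL_of_mem W hx]
  have hua : blockA B S = u * m ^ 2 := by
    rw [pow_two, hm2]
    ext x
    show blockA B S x = u (blockA B S x)
    have hmem : blockA B S x ∈ W := by
      rw [hWdef]
      intro k hk
      have h1 : ⟪(blockA B S) k, x⟫ = ⟪k, (blockA B S) x⟫ := inner_sa_left haadj k x
      rw [show (blockA B S) k = 0 from LinearMap.mem_ker.1 hk, inner_zero_left] at h1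
      exact h1.symm
    rw [hudef, projL_of_mem W hmem]
  have huf : u * f = f := by
    ext x
    show u (f x) = f x
    rw [hudef]
    exact projL_of_mem W (hfmem x)
  -- the candidate maximum
  set Y := blockC B S - adjoint f * f with hYdef
  have hYschur : IsSchur B S Y := by
    refine ⟨m, u, f, ⟨hmpos, hm4⟩, hkeru, hisom, hua, hmf, ?_, ?_⟩
    · rw [closure_range_eq_orth_ker m hmadj]
      exact hfK
    · rw [huf]
  have hYsa : IsSelfAdjoint Y := by
    rw [IsSelfAdjoint, hYdef, star_sub, star_blockC B S hB, star_mul, star_eq_adjoint,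
      star_eq_adjoint, adjoint_adjoint]
  have hdecompB : B = blockA B S + blockB B S + (1 - P) * B * P + blockC B S :=
    decomp B S hB
  have hadjb : adjoint (blockB B S) = (1 - P) * B * P := adjoint_blockB B S hB
  have hfm : adjoint f * m = adjoint (blockB B S) := by
    rw [← hmf, ← star_eq_adjoint, ← star_eq_adjoint, star_mul, star_eq_adjoint,
      star_eq_adjoint, hmadj]
  have hLL : adjoint (m + f) * (m + f)
      = blockA B S + blockB B S + (1 - P) * B * P + adjoint f * f := by
    have hadd : adjoint (m + f) = m + adjoint f := by
      rw [← star_eq_adjoint, star_add, hmstar, star_eq_adjoint]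
    rw [hadd, add_mul, mul_add, mul_add, hm2, hmf, hfm, hadjb]
    noncomm_ring
  have hBY : B - Y = adjoint (m + f) * (m + f) := by
    rw [hLL, hYdef]
    nth_rewrite 1 [hdecompB]
    abel
  have hYmem : Y ∈ Mminus B Sᗮ := by
    refine ⟨hYsa, ?_, ?_⟩
    · rw [hBY]
      exact adj_mul_self_isPositive (m + f)
    · rintro _ ⟨x, rfl⟩
      intro s hs
      have h1 : Y x = blockC B S x - adjoint f (f x) := rfl
      have h2 : ⟪s, blockC B S x⟫ = 0 := by
        have hQ : adjoint (1 - P) = 1 - P := by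
          rw [← star_eq_adjoint, star_one_sub_projL]
        have h3 : ⟪(1 - P) s, B ((1 - P) x)⟫ = ⟪s, (1 - P) (B ((1 - P) x))⟫ :=
          inner_sa_left hQ s (B ((1 - P) x))
        have h4 : (1 - P) s = 0 := by
          rw [sub_apply, ContinuousLinearMap.one_apply, hPdef, projL_of_mem S hs, sub_self]
        have h5 : ⟪s, blockC B S x⟫ = ⟪(1 - P) s, B ((1 - P) x)⟫ := h3.symm
        rw [h5, h4, inner_zero_left]
      have h6 : ⟪s, adjoint f (f x)⟫ = 0 := by
        rw [adjoint_inner_right, hfzero s hs, inner_zero_left]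
      rw [ContinuousLinearMap.coe_coe, h1, inner_sub_right, h2, h6]
      ring
  -- maximality
  refine ⟨Y, ⟨hYmem, ?_⟩, hYschur⟩
  rintro X ⟨hXsa, hDpos, hXr⟩
  have hXadj : adjoint X = X := isSelfAdjoint_iff'.1 hXsa
  have hPX : P * X = 0 := proj_comp_eq_zero S hXr
  have hXP : X * P = 0 := comp_proj_eq_zero S hXsa hXr
  set D := B - X with hDdef
  have hDadj : adjoint D = D := isSelfAdjoint_iff'.1 hDpos.isSelfAdjoint
  have hPDP : P * D * P = blockA B S := by
    have h1 : P * (B - X) * P = P * B * P - (P * X) * P := by noncomm_ring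
    rw [hDdef, blockA, h1, hPX, zero_mul, sub_zero]
  have hPDQ : P * D * (1 - P) = blockB B S := by
    have h1 : P * (B - X) * (1 - P) = P * B * (1 - P) - (P * X) * (1 - P) := by noncomm_ring
    rw [hDdef, blockB, h1, hPX, zero_mul, sub_zero]
  -- key inequality
  have hkey : ∀ v : H, ‖f v‖ ^ 2 ≤ (⟪D ((1 - P) v), (1 - P) v⟫).re := by
    intro v
    set z := (1 - P) v with hzdef
    set w := f v with hwdef
    have step0 : ∀ s : H, 0 ≤ ‖m s‖ ^ 2 + 2 * (⟪w, m s⟫).re + (⟪D z, z⟫).re := by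
      intro s
      have h0pre := hDpos.2 (P s + z)
      have h0 : 0 ≤ (⟪D (P s + z), P s + z⟫).re := h0pre
      have hexp : ⟪D (P s + z), P s + z⟫
          = ⟪D (P s), P s⟫ + ⟪D (P s), z⟫ + (⟪D z, P s⟫ + ⟪D z, z⟫) := by
        rw [map_add, inner_add_left, inner_add_right, inner_add_right]
      have e1 : ⟪D (P s), P s⟫ = ⟪m s, m s⟫ := by
        have h1 : ⟪P (D (P s)), s⟫ = ⟪D (P s), P s⟫ :=
          inner_sa_left hPadj (D (P s)) s
        have h2 : P (D (P s)) = blockA B S s := by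
          have := congrArg (fun T : H →L[ℂ] H => T s) hPDP
          simpa using this
        rw [← h1, h2, ← hm2]
        exact inner_sa_left hmadj (m s) s
      have e2 : ⟪D z, P s⟫ = ⟪w, m s⟫ := by
        have h1 : ⟪P (D z), s⟫ = ⟪D z, P s⟫ := inner_sa_left hPadj (D z) s
        have h2 : P (D z) = blockB B S v := by
          show P (D ((1 - P) v)) = blockB B S v
          exact congrArg (fun T : H →L[ℂ] H => T v) hPDQ
        have h3 : blockB B S v = m w := by
          rw [← hmf]; rfl
        rw [← h1, h2, h3]
        exact inner_sa_left hmadj w s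
      have e3 : (⟪D (P s), z⟫).re = (⟪D z, P s⟫).re := by
        have h1 : ⟪D (P s), z⟫ = ⟪P s, D z⟫ := inner_sa_left hDadj (P s) z
        rw [h1]
        exact inner_re_symm (𝕜 := ℂ) (P s) (D z)
      rw [hexp] at h0
      simp only [Complex.add_re] at h0
      rw [e3, e2] at h0
      have e1' : (⟪D (P s), P s⟫).re = ‖m s‖ ^ 2 := by
        rw [e1]; exact re_inner_self (m s)
      rw [e1'] at h0
      linarith
    have hgcont : Continuous fun t : H => ‖t‖ ^ 2 + 2 * (⟪w, t⟫).re + (⟪D z, z⟫).re := by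
      have h1 : Continuous fun t : H => (⟪w, t⟫ : ℂ) :=
        Continuous.inner continuous_const continuous_id
      have h2 : Continuous fun t : H => (⟪w, t⟫).re := Complex.continuous_re.comp h1
      exact ((continuous_norm.pow 2).add (continuous_const.mul h2)).add continuous_const
    have hclosed : IsClosed {t : H | 0 ≤ ‖t‖ ^ 2 + 2 * (⟪w, t⟫).re + (⟪D z, z⟫).re} :=
      isClosed_le continuous_const hgcont
    have hsub : (LinearMap.range (m : H →ₗ[ℂ] H) : Set H)
        ⊆ {t : H | 0 ≤ ‖t‖ ^ 2 + 2 * (⟪w, t⟫).re + (⟪D z, z⟫).re} := by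
      rintro _ ⟨s, rfl⟩
      exact step0 s
    have hwclos : -w ∈ closure (LinearMap.range (m : H →ₗ[ℂ] H) : Set H) := by
      have h1 : w ∈ (LinearMap.range (m : H →ₗ[ℂ] H)).topologicalClosure := by
        rw [closure_range_eq_orth_ker m hmadj]
        exact hfK ⟨v, rfl⟩
      have h2 : -w ∈ (LinearMap.range (m : H →ₗ[ℂ] H)).topologicalClosure :=
        Submodule.neg_mem _ h1
      rwa [← Submodule.topologicalClosure_coe]
    have hfin := closure_minimal hsub hclosed hwclos
    have hfin2 : 0 ≤ ‖-w‖ ^ 2 + 2 * (⟪w, -w⟫).re + (⟪D z, z⟫).re := hfin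
    rw [norm_neg, inner_neg_right] at hfin2
    have hre : (⟪w, w⟫).re = ‖w‖ ^ 2 := re_inner_self w
    rw [Complex.neg_re, hre] at hfin2
    linarith
  -- conclude positivity of Y - X
  constructor
  · exact isSelfAdjoint_iff_isSymmetric.1 (hYsa.sub hXsa)
  · intro v
    show 0 ≤ (⟪(Y - X) v, v⟫).re
    set z := (1 - P) v with hzdef
    have hQ : adjoint (1 - P) = 1 - P := by rw [← star_eq_adjoint, star_one_sub_projL]
    have e1 : ⟪blockC B S v, v⟫ = ⟪B z, z⟫ := by
      have h1 : ⟪(1 - P) (B ((1 - P) v)), v⟫ = ⟪B ((1 - P) v), (1 - P) v⟫ :=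
        inner_sa_left hQ (B ((1 - P) v)) v
      exact h1
    have hXz : X v = X z := by
      have h1 : X * (1 - P) = X := by rw [mul_sub, mul_one, hXP, sub_zero]
      show X v = X ((1 - P) v)
      exact (congrArg (fun T : H →L[ℂ] H => T v) h1).symm
    have e2 : ⟪X v, v⟫ = ⟪X z, z⟫ := by
      rw [hXz]
      have h1 : (1 - P) * X = X := by rw [sub_mul, one_mul, hPX, sub_zero]
      have h2 : X z = (1 - P) (X z) := by
        exact (congrArg (fun T : H →L[ℂ] H => T z) h1).symm
      calc ⟪X z, v⟫ = ⟪(1 - P) (X z), v⟫ := by rw [← h2]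
        _ = ⟪X z, (1 - P) v⟫ := inner_sa_left hQ (X z) v
        _ = ⟪X z, z⟫ := rfl
    have e3 : ⟪adjoint f (f v), v⟫ = ⟪f v, f v⟫ := adjoint_inner_left f v (f v)
    have hYX : (Y - X) v = blockC B S v - adjoint f (f v) - X v := by
      rw [sub_apply, hYdef, sub_apply, ContinuousLinearMap.mul_apply]
    rw [hYX, inner_sub_left, inner_sub_left, e1, e2, e3]
    simp only [Complex.sub_re]
    have e4 : (⟪B z, z⟫).re - (⟪X z, z⟫).re = (⟪D z, z⟫).re := by
      rw [hDdef]
      have : (B - X) z = B z - X z := rfl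
      rw [this, inner_sub_left, Complex.sub_re]
    have e5 : (⟪f v, f v⟫).re = ‖f v‖ ^ 2 := re_inner_self (f v)
    have := hkey v
    rw [← hzdef] at this
    linarith


/-- Characterization of weak complementability for a `B`-nonnegative subspace `S`; in that case
the Loewner maximum of `M⁻(B,Sᗮ)` is the Schur complement `B_{/S}`. -/
theorem stmt_2 (B : H →L[ℂ] H) (hB : IsSelfAdjoint B)
    (S : Submodule ℂ H) [CompleteSpace S] :
    (((∀ s ∈ S, 0 ≤ (inner ℂ (B s) s : ℂ).re) ∧ IsWeaklyComplementable B S) ↔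
      ∃ B1 B2 : H →L[ℂ] H, IsSelfAdjoint B1 ∧ IsSelfAdjoint B2 ∧ B2.IsPositive ∧
        B = B1 + B2 ∧ S ≤ LinearMap.ker (B1 : H →ₗ[ℂ] H)) ∧
    (((∀ s ∈ S, 0 ≤ (inner ℂ (B s) s : ℂ).re) ∧ IsWeaklyComplementable B S) ↔
      (Mminus B Sᗮ).Nonempty) ∧
    (((∀ s ∈ S, 0 ≤ (inner ℂ (B s) s : ℂ).re) ∧ IsWeaklyComplementable B S) ↔
      ∃ Y, IsMaxOf (Mminus B Sᗮ) Y) ∧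
    (∀ Y, IsMaxOf (Mminus B Sᗮ) Y → IsSchur B S Y) := by
  have hmain : ((∀ s ∈ S, 0 ≤ (inner ℂ (B s) s : ℂ).re) ∧ IsWeaklyComplementable B S) →
      ∃ Y, IsMaxOf (Mminus B Sᗮ) Y ∧ IsSchur B S Y := fun h =>
    main_construction B hB S h.1 h.2
  have hback := of_nonempty B hB S
  refine ⟨⟨?_, ?_⟩, ⟨?_, ?_⟩, ⟨?_, ?_⟩, ?_⟩
  · intro h
    obtain ⟨Y, ⟨⟨hYsa, hBYpos, hYr⟩, -⟩, -⟩ := hmain h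
    refine ⟨Y, B - Y, hYsa, hBYpos.isSelfAdjoint, hBYpos, by abel, ?_⟩
    intro s hs
    exact LinearMap.mem_ker.2 (apply_eq_zero_of_range_le_orth S hYsa hYr hs)
  · rintro ⟨B1, B2, h1, h2, hp, hsum, hker⟩
    apply hback
    refine ⟨B1, h1, ?_, ?_⟩
    · have hBB : B - B1 = B2 := by rw [hsum]; abel
      rw [hBB]; exact hp
    · rintro _ ⟨x, rfl⟩
      intro s hs
      have hadj : adjoint B1 = B1 := isSelfAdjoint_iff'.1 h1
      have h3 : B1 s = 0 := LinearMap.mem_ker.1 (hker hs)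
      rw [ContinuousLinearMap.coe_coe, ← inner_sa_left hadj s x, h3, inner_zero_left]
  · intro h
    obtain ⟨Y, hY, -⟩ := hmain h
    exact ⟨Y, hY.1⟩
  · exact hback
  · intro h
    obtain ⟨Y, hY, -⟩ := hmain h
    exact ⟨Y, hY⟩
  · rintro ⟨Y, hY⟩
    exact hback ⟨Y, hY.1⟩
  · intro Y hY
    have hi := hback ⟨Y, hY.1⟩
    obtain ⟨Y0, hY0max, hY0schur⟩ := main_construction B hB S hi.1 hi.2
    have hEq : Y = Y0 := le_antisymm ((le_def Y Y0).2 (hY0max.2 Y hY.1))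
      ((le_def Y0 Y).2 (hY.2 Y0 hY0max.1))
    rw [hEq]
    exact hY0schur
end
end
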